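/- arXiv:1408.5654 — 4 statements merged into one kernel-verified Lean document; each statement's English description precedes it below -/
import Mathlib

section
/- Let β > 0. For every δ > 0 there exist C > 0 and n₀ such that for all integers n ≥ n₀ and all real x with x ≥ (1+δ)√n: x² − k > 0 for each 1 ≤ k ≤ n, and | Σ_{k=1}^n 1/( (k+β−1/2)( x² − k + x√(x² − k) ) ) − log(x²)/(2x²) | ≤ C/n. -/
open Finset

lemma aux_sq : ∀ n : ℕ, 1 ≤ n → ∑ k ∈ Icc 1 n, (1:ℝ)/(k:ℝ)^2 ≤ 2 - 1/n := by
  intro n hn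
  induction n, hn using Nat.le_induction with
  | base => norm_num
  | succ n hn ih =>
    rw [Finset.sum_Icc_succ_top (by omega)]
    have h1 : (1:ℝ) ≤ n := by exact_mod_cast hn
    have h2 : (1:ℝ)/((n:ℝ)+1)^2 ≤ 1/n - 1/(n+1) := by
      rw [div_sub_div _ _ (by linarith : (n:ℝ) ≠ 0) (by linarith : (n:ℝ)+1 ≠ 0)]
      rw [div_le_div_iff₀ (by positivity) (by positivity)]
      nlinarith
    push_cast
    linarith

lemma aux_harm (n : ℕ) (hn : 1 ≤ n) :
    |(∑ k ∈ Icc 1 n, (1:ℝ)/(k:ℝ)) - Real.log n| ≤ 1 := by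
  have h1 : Real.log n ≤ Real.log (n+1) := by
    apply Real.log_le_log (by exact_mod_cast hn)
    push_cast; linarith
  have h2 := log_add_one_le_harmonic n
  have h3 := harmonic_le_one_add_log n
  have h4 : ((harmonic n : ℚ) : ℝ) = ∑ k ∈ Icc 1 n, (1:ℝ)/(k:ℝ) := by
    rw [harmonic_eq_sum_Icc]; push_cast; simp [one_div]
  push_cast at h2
  rw [h4] at h2 h3
  rw [abs_le]
  constructor <;> linarith

lemma aux_frac1 (a g X : ℝ) (ha : a ≠ 0) (hg : g ≠ 0) (hX : X ≠ 0) :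
    1/(a*g) - 1/(a*(2*X)) = (2*X - g)/(a*g*(2*X)) := by
  field_simp

lemma aux_frac2 (a k X : ℝ) (ha : a ≠ 0) (hk : k ≠ 0) (hX : X ≠ 0) :
    1/(a*(2*X)) - 1/(k*(2*X)) = (k - a)/(a*k*(2*X)) := by
  field_simp

lemma aux_frac3 (k c X : ℝ) (hk : k ≠ 0) (hc : c ≠ 0) (hX : X ≠ 0) :
    2*k/((k/2)*(c*X)*(2*X)) = 2/(c*X^2) := by
  field_simp

set_option maxHeartbeats 1000000 in
/-- For `β > 0`: for every `δ > 0` there exist `C > 0` and `n₀` such that for all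
`n ≥ n₀` and all real `x ≥ (1+δ)√n`: `x² − k > 0` for each `1 ≤ k ≤ n`, and
`|Σ_{k=1}^n 1/((k+β−1/2)(x² − k + x√(x² − k))) − log(x²)/(2x²)| ≤ C/n`. -/
theorem stmt_11 (β : ℝ) (hβ : 0 < β) :
    ∀ δ : ℝ, 0 < δ → ∃ C > 0, ∃ n₀ : ℕ, ∀ n : ℕ, n₀ ≤ n →
      ∀ x : ℝ, (1 + δ) * Real.sqrt (n : ℝ) ≤ x →
        (∀ k : ℕ, 1 ≤ k → k ≤ n → 0 < x ^ 2 - (k : ℝ))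
        ∧ |(∑ k ∈ Finset.Icc 1 n,
              1 / (((k : ℝ) + β - 1/2) * (x ^ 2 - (k : ℝ) + x * Real.sqrt (x ^ 2 - (k : ℝ)))))
            - Real.log (x ^ 2) / (2 * x ^ 2)| ≤ C / (n : ℝ) := by
  intro δ hδ
  set c : ℝ := 1 - 1/(1+δ)^2 with hc_def
  clear_value c
  have hd1 : (1:ℝ) < (1+δ)^2 := by nlinarith
  have hc : 0 < c := by
    rw [hc_def]
    have : 1/(1+δ)^2 < 1 := by
      rw [div_lt_one (by positivity)]; exact hd1
    linarith
  refine ⟨2/c + 2*|β - 1/2| + 1, by positivity, 1, ?_⟩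
  intro n hn x hx
  have hn1 : (1:ℝ) ≤ (n:ℝ) := by exact_mod_cast hn
  have hn0 : (0:ℝ) < n := by linarith
  have hsn : (1:ℝ) ≤ Real.sqrt n := by
    rw [show (1:ℝ) = Real.sqrt 1 by simp]
    exact Real.sqrt_le_sqrt hn1
  have hx0 : 0 < x := by nlinarith
  have hXx : (1+δ)^2 * n ≤ x^2 := by
    have h := mul_le_mul hx hx (by positivity) hx0.le
    rw [show (1+δ) * Real.sqrt n * ((1+δ) * Real.sqrt n)
        = (1+δ)^2 * (Real.sqrt n * Real.sqrt n) by ring,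
      Real.mul_self_sqrt hn0.le] at h
    nlinarith
  have hsqX : Real.sqrt (x^2) = x := Real.sqrt_sq hx0.le
  set X : ℝ := x^2 with hX_def
  have hX : (1+δ)^2 * n ≤ X := hXx
  have hX0 : 0 < X := by rw [hX_def]; positivity
  clear_value X
  have hnX : (n:ℝ) ≤ X := by nlinarith
  have hcX : c * X ≤ X - n := by
    have h1 : (n:ℝ) ≤ X / (1+δ)^2 := by
      rw [le_div_iff₀ (by positivity)]; linarith [hX]
    have hexp : c * X = X - X/(1+δ)^2 := by
      rw [hc_def]; field_simp
    rw [hexp] at *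
    linarith
  have hpos : ∀ k : ℕ, 1 ≤ k → k ≤ n → 0 < X - (k:ℝ) := by
    intro k hk1 hkn
    have h1 : (k:ℝ) ≤ n := by exact_mod_cast hkn
    have h2 : 0 < c * X := by positivity
    linarith
  refine ⟨hpos, ?_⟩
  -- per-element facts
  have key : ∀ k ∈ Icc 1 n,
      (c * X ≤ X - (k:ℝ) + x * Real.sqrt (X - k)) ∧
      (X - (k:ℝ) + x * Real.sqrt (X - k) ≤ 2*X) ∧
      (2*X - (X - (k:ℝ) + x * Real.sqrt (X - k)) ≤ 2*k) ∧
      ((k:ℝ)/2 ≤ (k:ℝ) + β - 1/2) ∧ (1 ≤ (k:ℝ)) := by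
    intro k hk
    rw [Finset.mem_Icc] at hk
    have hk1 : (1:ℝ) ≤ k := by exact_mod_cast hk.1
    have hkn : (k:ℝ) ≤ n := by exact_mod_cast hk.2
    have hXk : 0 < X - k := hpos k hk.1 hk.2
    have hsq : Real.sqrt (X - k) ≤ x := by
      rw [← hsqX]
      exact Real.sqrt_le_sqrt (by linarith)
    have hsq0 : 0 ≤ Real.sqrt (X - k) := Real.sqrt_nonneg _
    have hxg : X - k ≤ x * Real.sqrt (X - k) := by
      have := mul_le_mul_of_nonneg_right hsq hsq0
      rwa [Real.mul_self_sqrt hXk.le] at this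
    refine ⟨?_, ?_, ?_, ?_, hk1⟩
    · have : 0 ≤ x * Real.sqrt (X - k) := by positivity
      linarith
    · have hb : x * Real.sqrt (X - k) ≤ x * x :=
        mul_le_mul_of_nonneg_left hsq hx0.le
      have : x * x = X := by rw [hX_def]; ring
      linarith
    · linarith
    · linarith
  -- intermediate sums
  set S : ℝ := ∑ k ∈ Icc 1 n,
      1 / (((k : ℝ) + β - 1/2) * (X - (k : ℝ) + x * Real.sqrt (X - (k : ℝ)))) with hS_def
  set T : ℝ := ∑ k ∈ Icc 1 n, 1 / (((k : ℝ) + β - 1/2) * (2*X)) with hT_def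
  set U : ℝ := ∑ k ∈ Icc 1 n, 1 / ((k : ℝ) * (2*X)) with hU_def
  clear_value S T U
  -- step 1
  have step1 : |S - T| ≤ (2/c)/n := by
    rw [hS_def, hT_def, ← Finset.sum_sub_distrib]
    refine (Finset.abs_sum_le_sum_abs _ _).trans ?_
    have hb : ∀ k ∈ Icc 1 n,
        |1 / (((k : ℝ) + β - 1/2) * (X - (k : ℝ) + x * Real.sqrt (X - (k : ℝ))))
          - 1 / (((k : ℝ) + β - 1/2) * (2*X))| ≤ 2/(c*X^2) := by
      intro k hk
      obtain ⟨hg1, hg2, hg3, ha, hk1⟩ := key k hk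
      set g : ℝ := X - (k:ℝ) + x * Real.sqrt (X - k) with hg_def
      clear_value g
      have ha0 : 0 < (k:ℝ) + β - 1/2 := by linarith
      have hg0 : 0 < g := lt_of_lt_of_le (by positivity) hg1
      rw [aux_frac1 ((k:ℝ) + β - 1/2) g X ha0.ne' hg0.ne' hX0.ne']
      rw [abs_of_nonneg (by
        apply div_nonneg _ (by positivity)
        linarith)]
      calc (2*X - g) / (((k : ℝ) + β - 1/2) * g * (2*X))
          ≤ (2*k) / (((k:ℝ)/2) * (c*X) * (2*X)) := by
            apply div_le_div₀ (by positivity) hg3 (by positivity)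
            apply mul_le_mul_of_nonneg_right _ (by positivity)
            exact mul_le_mul ha hg1 (by positivity) ha0.le
        _ = 2/(c*X^2) := aux_frac3 _ _ _ (by positivity) hc.ne' hX0.ne'
    refine (Finset.sum_le_card_nsmul _ _ _ hb).trans ?_
    rw [Nat.card_Icc]
    simp only [nsmul_eq_mul]
    have hcard : ((n + 1 - 1 : ℕ) : ℝ) = n := by simp
    rw [hcard]
    have heq : (n:ℝ) * (2/(c*X^2)) = 2*n/(c*X^2) := by ring
    rw [heq, div_div, div_le_div_iff₀ (by positivity) (by positivity)]
    nlinarith [mul_le_mul_of_nonneg_left (mul_self_le_mul_self hn0.le hnX) hc.le]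
  -- step 2
  have hsumsq := aux_sq n hn
  have step2 : |T - U| ≤ (2*|β - 1/2|)/n := by
    rw [hT_def, hU_def, ← Finset.sum_sub_distrib]
    refine (Finset.abs_sum_le_sum_abs _ _).trans ?_
    have hb : ∀ k ∈ Icc 1 n,
        |1 / (((k : ℝ) + β - 1/2) * (2*X)) - 1 / ((k : ℝ) * (2*X))|
          ≤ (|β - 1/2|/X) * (1/(k:ℝ)^2) := by
      intro k hk
      obtain ⟨_, _, _, ha, hk1⟩ := key k hk
      have ha0 : 0 < (k:ℝ) + β - 1/2 := by linarith
      have hk0 : (0:ℝ) < k := by linarith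
      rw [aux_frac2 ((k:ℝ) + β - 1/2) (k:ℝ) X ha0.ne' hk0.ne' hX0.ne']
      rw [abs_div, abs_of_pos (by positivity : (0:ℝ) < ((k:ℝ) + β - 1/2) * k * (2*X))]
      have hnum : |(k:ℝ) - ((k:ℝ) + β - 1/2)| = |β - 1/2| := by
        rw [show (k:ℝ) - ((k:ℝ) + β - 1/2) = -(β - 1/2) by ring, abs_neg]
      rw [hnum]
      rw [div_le_iff₀ (by positivity)]
      have hdenom : (k:ℝ)^2 * X ≤ ((k:ℝ) + β - 1/2) * k * (2*X) := by
        nlinarith [mul_le_mul_of_nonneg_right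
          (mul_le_mul_of_nonneg_right ha hk0.le) hX0.le]
      calc |β - 1/2| = (|β - 1/2| / ((k:ℝ)^2 * X)) * ((k:ℝ)^2 * X) :=
            (div_mul_cancel₀ _ (by positivity : (0:ℝ) < (k:ℝ)^2*X).ne').symm
        _ ≤ (|β - 1/2|/X * (1/(k:ℝ)^2)) * (((k:ℝ) + β - 1/2) * k * (2*X)) := by
            have : |β - 1/2| / ((k:ℝ)^2 * X) = |β - 1/2|/X * (1/(k:ℝ)^2) := by
              rw [div_mul_div_comm, mul_one, mul_comm X ((k:ℝ)^2)]
            rw [← this]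
            exact mul_le_mul_of_nonneg_left hdenom (by positivity)
    refine (Finset.sum_le_sum hb).trans ?_
    rw [← Finset.mul_sum]
    have h2 : ∑ k ∈ Icc 1 n, (1:ℝ)/(k:ℝ)^2 ≤ 2 := by
      have : (0:ℝ) < 1/n := by positivity
      linarith
    calc |β - 1/2|/X * ∑ k ∈ Icc 1 n, (1:ℝ)/(k:ℝ)^2
        ≤ |β - 1/2|/X * 2 := by
          exact mul_le_mul_of_nonneg_left h2 (by positivity)
      _ ≤ (2*|β - 1/2|)/n := by
          rw [div_mul_eq_mul_div, div_le_div_iff₀ hX0 hn0]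
          nlinarith [abs_nonneg (β - 1/2)]
  -- step 3 : U = H/(2X)
  have hUeq : U = (∑ k ∈ Icc 1 n, (1:ℝ)/(k:ℝ)) / (2*X) := by
    rw [hU_def, Finset.sum_div]
    refine Finset.sum_congr rfl fun k _ => ?_
    rw [div_div]
  have step3 : |U - Real.log n / (2*X)| ≤ (1/2)/n := by
    rw [hUeq, div_sub_div_same, abs_div, abs_of_pos (by positivity : (0:ℝ) < 2*X)]
    calc |(∑ k ∈ Icc 1 n, (1:ℝ)/(k:ℝ)) - Real.log n| / (2*X)
        ≤ 1 / (2*X) := by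
          gcongr
          exact aux_harm n hn
      _ ≤ (1/2)/n := by
          rw [div_div, div_le_div_iff₀ (by positivity) (by positivity)]
          linarith
  -- step 4
  have step4 : |Real.log n / (2*X) - Real.log X / (2*X)| ≤ (1/2)/n := by
    have hlog : Real.log n ≤ Real.log X := Real.log_le_log hn0 hnX
    have hbnd : Real.log X - Real.log n ≤ X/n := by
      rw [← Real.log_div hX0.ne' hn0.ne']
      have := Real.log_le_sub_one_of_pos (show (0:ℝ) < X/n by positivity)
      linarith
    rw [div_sub_div_same, abs_div, abs_of_pos (by positivity : (0:ℝ) < 2*X),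
      abs_of_nonpos (by linarith)]
    rw [div_le_div_iff₀ (by positivity) (by positivity)]
    have : (X/n) * n = X := by field_simp
    nlinarith
  -- assembly
  calc |S - Real.log X / (2*X)|
      ≤ |S - T| + |T - U| + |U - Real.log n / (2*X)|
          + |Real.log n / (2*X) - Real.log X / (2*X)| := by
        have t1 := abs_sub_le S T (Real.log X / (2*X))
        have t2 := abs_sub_le T U (Real.log X / (2*X))
        have t3 := abs_sub_le U (Real.log n / (2*X)) (Real.log X / (2*X))
        linarith
    _ ≤ (2/c)/n + (2*|β - 1/2|)/n + (1/2)/n + (1/2)/n := by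
        linarith
    _ = (2/c + 2*|β - 1/2| + 1)/n := by ring
end

section
/- Let 0 ≤ α < β, λ_n = (n+β+α−1)(n+β−α−1)/(2(n+β−1/2)), N = n+β−1. For every δ > 0 there exist C > 0 and n₀ such that for all n ≥ n₀, all 1 ≤ k ≤ n, and all real z ≥ 1+δ: | log( z + √(z² − 2λ_k/N) ) − log( z + √(z² − k/n) ) + (β − 3/2)/( 2n ( z² − k/n + z√(z² − k/n) ) ) − (α² − 1/4)/( 2n (k+β−1/2) ( z² − k/n + z√(z² − k/n) ) ) − ((β−1)/(2n)) ( z/√(z² − k/n) − 1 ) | ≤ C n^{−2}. -/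
set_option maxHeartbeats 1000000

lemma log_taylor_bound {x : ℝ} (h : -(1/2) ≤ x) :
    |Real.log (1 + x) - x| ≤ 2 * x ^ 2 := by
  have hx : (0:ℝ) < 1 + x := by linarith
  have hupper : Real.log (1 + x) ≤ x := by
    have := Real.log_le_sub_one_of_pos hx; linarith
  have hlow : x / (1 + x) ≤ Real.log (1 + x) := by
    have hinv : (0:ℝ) < (1 + x)⁻¹ := by positivity
    have h2 := Real.log_le_sub_one_of_pos hinv
    rw [Real.log_inv] at h2
    have h3 : (1 + x)⁻¹ - 1 = -(x / (1 + x)) := by field_simp; ring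
    rw [h3] at h2
    linarith
  have hq : x - 2 * x ^ 2 ≤ x / (1 + x) := by
    rw [le_div_iff₀ hx]
    nlinarith [mul_nonneg (sq_nonneg x) (by linarith : (0:ℝ) ≤ 1 + 2*x)]
  rw [abs_le]
  constructor <;> nlinarith [sq_nonneg x]

lemma aux5 (w s t z : ℝ) (hs : s ≠ 0) (hts : t + s ≠ 0) (hzs : z + s ≠ 0)
    (hrel : (t - s) * (t + s) = -w) :
    -w/((t+s)*(z+s)) = -w/(2*s*(z+s)) + -(w^2)/(2*s*(t+s)^2*(z+s)) := by
  have hD1 : (t+s)*(z+s) ≠ 0 := mul_ne_zero hts hzs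
  have hD2 : 2*s*(z+s) ≠ 0 := mul_ne_zero (mul_ne_zero two_ne_zero hs) hzs
  have hD3 : 2*s*(t+s)^2*(z+s) ≠ 0 :=
    mul_ne_zero (mul_ne_zero (mul_ne_zero two_ne_zero hs) (pow_ne_zero 2 hts)) hzs
  rw [div_add_div _ _ hD2 hD3, div_eq_div_iff hD1 (mul_ne_zero hD2 hD3)]
  linear_combination (2*s*w*(z+s)^2*(t+s)) * hrel

lemma aux3 (kr nn s z β : ℝ) (hn : nn ≠ 0) (hs : s ≠ 0) (hzs : z + s ≠ 0)
    (h2 : s^2 * nn = z^2 * nn - kr) :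
    (β-1)/(2*nn)*(z/s - 1) = (β-1)*kr/(2*nn^2*(s*(z+s))) := by
  rw [div_sub_one hs, div_mul_div_comm,
    div_eq_div_iff (mul_ne_zero (mul_ne_zero two_ne_zero hn) hs)
      (mul_ne_zero (mul_ne_zero two_ne_zero (pow_ne_zero 2 hn)) (mul_ne_zero hs hzs))]
  linear_combination (-(2*nn*s*(β-1))) * h2

lemma hd2aux (nn kr α β d : ℝ) (h1 : nn ≠ 0) (h2 : kr + β - 1/2 ≠ 0) (h3 : nn + β - 1 ≠ 0)
    (hd : d = ((kr+β+α-1)*(kr+β-α-1)*nn - (kr+β-1/2)*(nn+β-1)*kr)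
        /((kr+β-1/2)*(nn+β-1)*nn)) :
    -(d/2) + (β-3/2)/(2*nn) - (α^2-1/4)/(2*nn*(kr+β-1/2)) - (β-1)*kr/(2*nn^2)
      = (β-1)*d/(2*nn) := by
  have hD : ((kr+β-1/2)*(nn+β-1)*nn) ≠ 0 := mul_ne_zero (mul_ne_zero h2 h3) h1
  have h2n : (2:ℝ)*nn ≠ 0 := mul_ne_zero two_ne_zero h1
  subst hd
  rw [div_div, ← neg_div, ← mul_div_assoc, div_div,
    div_add_div _ _ (mul_ne_zero hD two_ne_zero) h2n,
    div_sub_div _ _ (mul_ne_zero (mul_ne_zero hD two_ne_zero) h2n)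
      (mul_ne_zero h2n h2),
    div_sub_div _ _ (mul_ne_zero (mul_ne_zero (mul_ne_zero hD two_ne_zero) h2n)
      (mul_ne_zero h2n h2)) (mul_ne_zero two_ne_zero (pow_ne_zero 2 h1)),
    div_eq_div_iff (mul_ne_zero (mul_ne_zero (mul_ne_zero (mul_ne_zero hD two_ne_zero) h2n)
      (mul_ne_zero h2n h2)) (mul_ne_zero two_ne_zero (pow_ne_zero 2 h1)))
      (mul_ne_zero hD h2n)]
  ring


/-- With `λ_n = (n+β+α−1)(n+β−α−1)/(2(n+β−1/2))` and `N = n+β−1`: for every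
`δ > 0` there exist `C > 0` and `n₀` such that for all `n ≥ n₀`, `1 ≤ k ≤ n`, `z ≥ 1+δ`:
`| log(z + √(z² − 2λ_k/N)) − log(z + √(z² − k/n))
   + (β−3/2)/(2n(z² − k/n + z√(z² − k/n)))
   − (α²−1/4)/(2n(k+β−1/2)(z² − k/n + z√(z² − k/n)))
   − ((β−1)/(2n))(z/√(z² − k/n) − 1) | ≤ C n^{−2}`. -/
theorem stmt_12 (α β : ℝ) (hα : 0 ≤ α) (hαβ : α < β)
    (lam : ℕ → ℝ)
    (hlam : ∀ n : ℕ, 1 ≤ n →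
      lam n = (((n : ℝ) + β + α - 1) * ((n : ℝ) + β - α - 1)) / (2 * ((n : ℝ) + β - 1/2))) :
    ∀ δ : ℝ, 0 < δ → ∃ C > 0, ∃ n₀ : ℕ, ∀ n : ℕ, n₀ ≤ n →
      ∀ k : ℕ, 1 ≤ k → k ≤ n → ∀ z : ℝ, 1 + δ ≤ z →
        |Real.log (z + Real.sqrt (z ^ 2 - 2 * lam k / ((n : ℝ) + β - 1)))
            - Real.log (z + Real.sqrt (z ^ 2 - (k : ℝ) / (n : ℝ)))
            + (β - 3/2) / (2 * (n : ℝ)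
                * (z ^ 2 - (k : ℝ) / (n : ℝ)
                  + z * Real.sqrt (z ^ 2 - (k : ℝ) / (n : ℝ))))
            - (α ^ 2 - 1/4) / (2 * (n : ℝ) * ((k : ℝ) + β - 1/2)
                * (z ^ 2 - (k : ℝ) / (n : ℝ)
                  + z * Real.sqrt (z ^ 2 - (k : ℝ) / (n : ℝ))))
            - (β - 1) / (2 * (n : ℝ))
                * (z / Real.sqrt (z ^ 2 - (k : ℝ) / (n : ℝ)) - 1)|
          ≤ C / (n : ℝ) ^ 2 := by
  have hβ : 0 < β := lt_of_le_of_lt hα hαβ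
  intro δ hδ
  set c : ℝ := 2*δ + δ^2 with hc_def
  have hc : 0 < c := by rw [hc_def]; linarith [sq_nonneg δ]
  have hsc : 0 < Real.sqrt c := Real.sqrt_pos.mpr hc
  set C₁ : ℝ := |β - 3/2| + |α^2 - 1/4|/(β + 1/2) + |β - 1| + 1 with hC₁_def
  have hC₁ : 0 < C₁ := by
    have h1 : 0 ≤ |β - 3/2| := abs_nonneg _
    have h2 : 0 ≤ |α^2 - 1/4|/(β + 1/2) := div_nonneg (abs_nonneg _) (by linarith)
    have h3 : 0 ≤ |β - 1| := abs_nonneg _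
    rw [hC₁_def]; linarith
  set C : ℝ := 2*C₁^2/c + C₁^2/(2*c*Real.sqrt c) + |β - 1| * C₁/Real.sqrt c + 1 with hC_def
  have hCpos : 0 < C := by
    have h1 : 0 ≤ 2*C₁^2/c := div_nonneg (by positivity) hc.le
    have h2 : 0 ≤ C₁^2/(2*c*Real.sqrt c) :=
      div_nonneg (sq_nonneg _) (by positivity)
    have h3 : 0 ≤ |β - 1| * C₁/Real.sqrt c :=
      div_nonneg (mul_nonneg (abs_nonneg _) hC₁.le) (Real.sqrt_nonneg _)
    rw [hC_def]; linarith
  clear_value c C₁ C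
  refine ⟨C, hCpos, ⌈max (4 - 4*β) (4*C₁/Real.sqrt c)⌉₊ + 1, ?_⟩
  intro n hn k hk1 hkn z hz
  have hn1 : 1 ≤ n := le_trans (Nat.le_add_left 1 _) hn
  have hnR : (1:ℝ) ≤ (n:ℝ) := by exact_mod_cast hn1
  have hnpos : (0:ℝ) < (n:ℝ) := by linarith
  have hceil : max (4 - 4*β) (4*C₁/Real.sqrt c) ≤ (n:ℝ) := by
    have h' : ((⌈max (4 - 4*β) (4*C₁/Real.sqrt c)⌉₊ : ℕ) : ℝ) ≤ (n:ℝ) := by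
      exact_mod_cast Nat.le_of_succ_le hn
    exact (Nat.le_ceil _).trans h'
  have hn4 : 4 - 4*β ≤ (n:ℝ) := le_trans (le_max_left _ _) hceil
  have hnC : 4*C₁/Real.sqrt c ≤ (n:ℝ) := le_trans (le_max_right _ _) hceil
  have hkR : (1:ℝ) ≤ (k:ℝ) := by exact_mod_cast hk1
  have hknR : (k:ℝ) ≤ (n:ℝ) := by exact_mod_cast hkn
  have hz1 : (1:ℝ) < z := by linarith
  have hkb : (0:ℝ) < (k:ℝ) + β - 1/2 := by linarith
  have hM0 : (0:ℝ) < (n:ℝ) + β - 1 := by linarith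
  have hMge : (n:ℝ)/2 ≤ (n:ℝ) + β - 1 := by linarith
  set a : ℝ := 2 * lam k / ((n:ℝ) + β - 1) with ha_def
  set b : ℝ := (k:ℝ)/(n:ℝ) with hb_def
  clear_value a b
  have hlk := hlam k hk1
  have hL2 : a = (((k:ℝ)+β+α-1)*((k:ℝ)+β-α-1))/(((k:ℝ)+β-1/2)*((n:ℝ)+β-1)) := by
    rw [ha_def, hlk]; field_simp
  have hdval : a - b = ((((k:ℝ)+β+α-1)*((k:ℝ)+β-α-1))*(n:ℝ)
      - ((k:ℝ)+β-1/2)*((n:ℝ)+β-1)*(k:ℝ))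
      /(((k:ℝ)+β-1/2)*((n:ℝ)+β-1)*(n:ℝ)) := by
    rw [hL2, hb_def]
    exact div_sub_div _ _ (mul_ne_zero hkb.ne' hM0.ne') hnpos.ne'
  have hd2 := hd2aux (n:ℝ) (k:ℝ) α β (a-b) hnpos.ne' hkb.ne' hM0.ne' hdval
  -- range of a and b
  have hb0 : 0 ≤ b := by rw [hb_def]; positivity
  have hb1 : b ≤ 1 := by rw [hb_def]; exact (div_le_one hnpos).mpr hknR
  have ha1 : a ≤ 1 := by
    rw [hL2, div_le_one (mul_pos hkb hM0)]
    have key : ((k:ℝ)+β-1)*((k:ℝ)+β-1) ≤ ((k:ℝ)+β-1/2)*((n:ℝ)+β-1) :=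
      mul_le_mul (by linarith) (by linarith) (by linarith) (by linarith)
    linarith [key, sq_nonneg α]
  have hzsq : (0:ℝ) ≤ z - (1+δ) := by linarith
  have hc2b : c ≤ z^2 - b := by
    rw [hc_def]
    linarith [mul_nonneg hzsq (by linarith : (0:ℝ) ≤ z + (1+δ)), hb1]
  have hc2a : c ≤ z^2 - a := by
    rw [hc_def]
    linarith [mul_nonneg hzsq (by linarith : (0:ℝ) ≤ z + (1+δ)), ha1]
  set s : ℝ := Real.sqrt (z^2 - b) with hs_def
  set t : ℝ := Real.sqrt (z^2 - a) with ht_def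
  clear_value s t
  have hs2 : s^2 = z^2 - b := by rw [hs_def]; exact Real.sq_sqrt (by linarith)
  have ht2 : t^2 = z^2 - a := by rw [ht_def]; exact Real.sq_sqrt (by linarith)
  have hss : Real.sqrt c ≤ s := by rw [hs_def]; exact Real.sqrt_le_sqrt hc2b
  have hts : Real.sqrt c ≤ t := by rw [ht_def]; exact Real.sqrt_le_sqrt hc2a
  have hspos : 0 < s := lt_of_lt_of_le hsc hss
  have htpos : 0 < t := lt_of_lt_of_le hsc hts
  have hzs1 : (1:ℝ) ≤ z + s := by linarith
  have hzspos : (0:ℝ) < z + s := by linarith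
  have htspos : (0:ℝ) < t + s := by linarith
  have hztpos : (0:ℝ) < z + t := by linarith
  set u : ℝ := (t - s)/(z + s) with hu_def
  clear_value u
  have hrel : (t - s) * (t + s) = -(a-b) := by linear_combination ht2 - hs2
  have htms : t - s = -(a-b)/(t+s) := by
    rw [eq_div_iff htspos.ne']; exact hrel
  have hueq : u = -(a-b)/((t+s)*(z+s)) := by rw [hu_def, htms, div_div]
  have h1u : 1 + u = (z+t)/(z+s) := by
    rw [hu_def, eq_div_iff hzspos.ne', add_mul, one_mul, div_mul_cancel₀ _ hzspos.ne']
    ring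
  have hlog : Real.log (z + t) = Real.log (1 + u) + Real.log (z + s) := by
    rw [h1u, Real.log_div hztpos.ne' hzspos.ne']; ring
  -- bound |a - b|
  have hN : (((k:ℝ)+β+α-1)*((k:ℝ)+β-α-1))*(n:ℝ) - ((k:ℝ)+β-1/2)*((n:ℝ)+β-1)*(k:ℝ)
      = (β-3/2)*(((k:ℝ)+β-1/2)*(n:ℝ)) - (α^2-1/4)*(n:ℝ)
        - (β-1)*((k:ℝ)*((k:ℝ)+β-1/2)) := by ring
  have hDpos : (0:ℝ) < ((k:ℝ)+β-1/2)*((n:ℝ)+β-1)*(n:ℝ) :=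
    mul_pos (mul_pos hkb hM0) hnpos
  have hκn : (0:ℝ) < ((k:ℝ)+β-1/2)*(n:ℝ) := mul_pos hkb hnpos
  have hNb : |(((k:ℝ)+β+α-1)*((k:ℝ)+β-α-1))*(n:ℝ)
      - ((k:ℝ)+β-1/2)*((n:ℝ)+β-1)*(k:ℝ)| ≤ C₁*(((k:ℝ)+β-1/2)*(n:ℝ)) := by
    have p1 : (β-3/2)*(((k:ℝ)+β-1/2)*(n:ℝ)) ≤ |β - 3/2| * (((k:ℝ)+β-1/2)*(n:ℝ)) :=
      mul_le_mul_of_nonneg_right (le_abs_self _) hκn.le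
    have p1' : -(|β - 3/2| * (((k:ℝ)+β-1/2)*(n:ℝ))) ≤ (β-3/2)*(((k:ℝ)+β-1/2)*(n:ℝ)) := by
      linarith [mul_le_mul_of_nonneg_right (neg_abs_le (β-3/2)) hκn.le]
    have p2 : (α^2-1/4)*(n:ℝ) ≤ |α^2 - 1/4| * (n:ℝ) :=
      mul_le_mul_of_nonneg_right (le_abs_self _) hnpos.le
    have p2' : -(|α^2 - 1/4| * (n:ℝ)) ≤ (α^2-1/4)*(n:ℝ) := by
      linarith [mul_le_mul_of_nonneg_right (neg_abs_le (α^2-1/4)) hnpos.le]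
    have p3 : (β-1)*((k:ℝ)*((k:ℝ)+β-1/2)) ≤ |β - 1| * ((k:ℝ)*((k:ℝ)+β-1/2)) :=
      mul_le_mul_of_nonneg_right (le_abs_self _) (by positivity)
    have p3' : -(|β - 1| * ((k:ℝ)*((k:ℝ)+β-1/2))) ≤ (β-1)*((k:ℝ)*((k:ℝ)+β-1/2)) := by
      linarith [mul_le_mul_of_nonneg_right (neg_abs_le (β-1)) (by positivity : (0:ℝ) ≤ (k:ℝ)*((k:ℝ)+β-1/2))]
    have e4 : |α^2 - 1/4| * (n:ℝ) ≤ (|α^2 - 1/4|/(β+1/2))*(((k:ℝ)+β-1/2)*(n:ℝ)) := by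
      rw [div_mul_eq_mul_div, le_div_iff₀ (by linarith : (0:ℝ) < β+1/2)]
      linarith [mul_nonneg (mul_nonneg (abs_nonneg (α^2-1/4)) hnpos.le)
        (by linarith : (0:ℝ) ≤ (k:ℝ)-1)]
    have e5 : |β - 1| * ((k:ℝ)*((k:ℝ)+β-1/2)) ≤ |β - 1| * (((k:ℝ)+β-1/2)*(n:ℝ)) := by
      linarith [mul_nonneg (abs_nonneg (β-1)) (mul_nonneg hkb.le (by linarith : (0:ℝ) ≤ (n:ℝ)-(k:ℝ)))]
    rw [abs_le]
    constructor
    · rw [hC₁_def]; linarith [hN, p1', p2, p3, e4, e5, hκn]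
    · rw [hC₁_def]; linarith [hN, p1, p2', p3', e4, e5, hκn]
  have habd : |a - b| ≤ C₁/((n:ℝ)+β-1) := by
    rw [hdval, abs_div, abs_of_pos hDpos, div_le_div_iff₀ hDpos hM0]
    linarith [mul_le_mul_of_nonneg_right hNb hM0.le]
  have habd2 : |a - b| ≤ 2*C₁/(n:ℝ) := by
    refine habd.trans ?_
    rw [div_le_div_iff₀ hM0 hnpos]
    linarith [mul_le_mul_of_nonneg_left hMge hC₁.le]
  -- bound |u|
  have h2sc : 2*Real.sqrt c ≤ t + s := by linarith
  have hu_abs : |u| ≤ C₁/(Real.sqrt c*(n:ℝ)) := by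
    rw [hueq, abs_div, abs_neg, abs_of_pos (mul_pos htspos hzspos)]
    calc |a-b|/((t+s)*(z+s)) ≤ (2*C₁/(n:ℝ))/(2*Real.sqrt c) := by
          apply div_le_div₀ (by positivity) habd2 (by positivity)
          linarith [mul_le_mul_of_nonneg_left hzs1 htspos.le]
      _ = C₁/(Real.sqrt c*(n:ℝ)) := by
          rw [div_div, div_eq_div_iff (by positivity) (by positivity)]; ring
  have hscn : C₁/(Real.sqrt c*(n:ℝ)) ≤ 1/4 := by
    rw [div_le_iff₀ (by positivity)]
    have := (div_le_iff₀ hsc).mp hnC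
    linarith
  have hu_half : -(1/2) ≤ u := by
    have h := abs_le.mp (hu_abs.trans hscn)
    linarith [h.1]
  -- pieces
  have h5 := aux5 (a-b) s t z hspos.ne' htspos.ne' hzspos.ne' hrel
  have h6 : -(a-b)/(2*s*(z+s)) + (β-3/2)/(2*(n:ℝ)*(s*(z+s)))
      - (α^2-1/4)/(2*(n:ℝ)*((k:ℝ)+β-1/2)*(s*(z+s)))
      - (β-1)*(k:ℝ)/(2*(n:ℝ)^2*(s*(z+s)))
      = (β-1)*(a-b)/(2*(n:ℝ)*(s*(z+s))) := by
    have e0 : -((a-b)/2)/(s*(z+s)) = -(a-b)/(2*s*(z+s)) := by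
      rw [neg_div, div_div, ← mul_assoc, ← neg_div]
    have e1 : (β-3/2)/(2*(n:ℝ))/(s*(z+s)) = (β-3/2)/(2*(n:ℝ)*(s*(z+s))) :=
      div_div _ _ _
    have e2 : (α^2-1/4)/(2*(n:ℝ)*((k:ℝ)+β-1/2))/(s*(z+s))
        = (α^2-1/4)/(2*(n:ℝ)*((k:ℝ)+β-1/2)*(s*(z+s))) := div_div _ _ _
    have e3 : (β-1)*(k:ℝ)/(2*(n:ℝ)^2)/(s*(z+s))
        = (β-1)*(k:ℝ)/(2*(n:ℝ)^2*(s*(z+s))) := div_div _ _ _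
    have e4 : (β-1)*(a-b)/(2*(n:ℝ))/(s*(z+s))
        = (β-1)*(a-b)/(2*(n:ℝ)*(s*(z+s))) := div_div _ _ _
    rw [← e0, ← e1, ← e2, ← e3, ← e4, ← add_div, ← sub_div,
      ← sub_div, div_eq_div_iff (mul_pos hspos hzspos).ne'
        (mul_pos hspos hzspos).ne']
    linear_combination (s*(z+s)) * hd2
  have hbk : b*(n:ℝ) = (k:ℝ) := by
    rw [hb_def]; field_simp
  have hsno : s^2*(n:ℝ) = z^2*(n:ℝ) - (k:ℝ) := by
    linear_combination (n:ℝ)*hs2 - hbk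
  have hcorr3 := aux3 (k:ℝ) (n:ℝ) s z β hnpos.ne' hspos.ne' hzspos.ne' hsno
  have hD2 : z^2 - b + z*s = s*(z+s) := by linear_combination (-1 : ℝ) * hs2
  rw [hlog, hD2, hcorr3]
  have hfinal : Real.log (1 + u) + Real.log (z + s) - Real.log (z + s)
      + (β - 3/2) / (2 * (n:ℝ) * (s * (z + s)))
      - (α ^ 2 - 1/4) / (2 * (n:ℝ) * ((k:ℝ) + β - 1/2) * (s * (z + s)))
      - (β - 1) * (k:ℝ) / (2 * (n:ℝ) ^ 2 * (s * (z + s)))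
      = (Real.log (1 + u) - u) + -((a-b)^2)/(2*s*(t+s)^2*(z+s))
        + (β-1)*(a-b)/(2*(n:ℝ)*(s*(z+s))) := by
    rw [hueq]
    linear_combination h5 + h6
  rw [hfinal]
  have B1 : |Real.log (1+u) - u| ≤ 2*C₁^2/c/(n:ℝ)^2 := by
    refine (log_taylor_bound hu_half).trans ?_
    have hu2 : u^2 ≤ (C₁/(Real.sqrt c*(n:ℝ)))^2 := by
      have h := abs_le.mp hu_abs
      exact sq_le_sq' h.1 h.2
    have heq : (C₁/(Real.sqrt c*(n:ℝ)))^2 = C₁^2/c/(n:ℝ)^2 := by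
      rw [div_pow, mul_pow, Real.sq_sqrt hc.le]; ring
    rw [heq] at hu2
    have : 2*(C₁^2/c/(n:ℝ)^2) = 2*C₁^2/c/(n:ℝ)^2 := by ring
    linarith
  have B2 : |-((a-b)^2)/(2*s*(t+s)^2*(z+s))| ≤ C₁^2/(2*c*Real.sqrt c)/(n:ℝ)^2 := by
    have hdenpos : (0:ℝ) < 2*s*(t+s)^2*(z+s) :=
      mul_pos (mul_pos (mul_pos two_pos hspos) (pow_pos htspos 2)) hzspos
    rw [abs_div, abs_neg, abs_of_nonneg (sq_nonneg _), abs_of_pos hdenpos]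
    have hnum : (a-b)^2 ≤ (2*C₁/(n:ℝ))^2 := by
      have h := abs_le.mp habd2
      exact sq_le_sq' h.1 h.2
    have e6' := pow_le_pow_left₀ (by positivity : (0:ℝ) ≤ 2*Real.sqrt c) h2sc 2
    rw [mul_pow, Real.sq_sqrt hc.le] at e6'
    have e6 : 4*c ≤ (t+s)^2 := by linarith [e6']
    have pp1 : Real.sqrt c*(4*c) ≤ s*(t+s)^2 :=
      mul_le_mul hss e6 (by linarith) hspos.le
    have pp2 : s*(t+s)^2*1 ≤ s*(t+s)^2*(z+s) :=
      mul_le_mul_of_nonneg_left (by linarith) (mul_nonneg hspos.le (sq_nonneg _))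
    have hden8 : 8*c*Real.sqrt c ≤ 2*s*(t+s)^2*(z+s) := by linarith [pp1, pp2]
    calc (a-b)^2/(2*s*(t+s)^2*(z+s)) ≤ (2*C₁/(n:ℝ))^2/(8*c*Real.sqrt c) := by
          apply div_le_div₀ (by positivity) hnum (by positivity) hden8
      _ = C₁^2/(2*c*Real.sqrt c)/(n:ℝ)^2 := by
          field_simp
          ring
  have B3 : |(β-1)*(a-b)/(2*(n:ℝ)*(s*(z+s)))| ≤ |β - 1| * C₁/Real.sqrt c/(n:ℝ)^2 := by
    have hden3 : (0:ℝ) < 2*(n:ℝ)*(s*(z+s)) :=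
      mul_pos (mul_pos two_pos hnpos) (mul_pos hspos hzspos)
    rw [abs_div, abs_mul, abs_of_pos hden3]
    have hnum3 : |β - 1| * |a-b| ≤ |β - 1| * (2*C₁/(n:ℝ)) :=
      mul_le_mul_of_nonneg_left habd2 (abs_nonneg _)
    have pz : Real.sqrt c ≤ s*(z+s) := by
      linarith [mul_le_mul_of_nonneg_left hzs1 hspos.le]
    have hden3' : 2*(n:ℝ)*Real.sqrt c ≤ 2*(n:ℝ)*(s*(z+s)) :=
      mul_le_mul_of_nonneg_left pz (by positivity)
    calc |β - 1| * |a-b|/(2*(n:ℝ)*(s*(z+s)))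
        ≤ (|β - 1| * (2*C₁/(n:ℝ)))/(2*(n:ℝ)*Real.sqrt c) := by
          apply div_le_div₀ (by positivity) hnum3 (by positivity) hden3'
      _ = |β - 1| * C₁/Real.sqrt c/(n:ℝ)^2 := by
          field_simp
  calc |(Real.log (1+u) - u) + -((a-b)^2)/(2*s*(t+s)^2*(z+s))
        + (β-1)*(a-b)/(2*(n:ℝ)*(s*(z+s)))|
      ≤ |Real.log (1+u) - u| + |-((a-b)^2)/(2*s*(t+s)^2*(z+s))|
        + |(β-1)*(a-b)/(2*(n:ℝ)*(s*(z+s)))| := abs_add_three _ _ _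
    _ ≤ 2*C₁^2/c/(n:ℝ)^2 + C₁^2/(2*c*Real.sqrt c)/(n:ℝ)^2
        + |β - 1| * C₁/Real.sqrt c/(n:ℝ)^2 := by linarith
    _ = (2*C₁^2/c + C₁^2/(2*c*Real.sqrt c) + |β - 1| * C₁/Real.sqrt c)/(n:ℝ)^2 := by
          ring
    _ ≤ C/(n:ℝ)^2 := by
          have hle : 2*C₁^2/c + C₁^2/(2*c*Real.sqrt c) + |β - 1| * C₁/Real.sqrt c ≤ C := by
            rw [hC_def]; linarith
          exact (div_le_div_iff_of_pos_right (pow_pos hnpos 2)).mpr hle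
end

section
/- For all real numbers δ > 0 and R > 1+δ there exist C > 0 and n₀ such that for all integers n ≥ n₀ and all real z ∈ [1+δ, R]: | Σ_{k=1}^n log( z + √(z² − k/n) ) − n( z² − 1/2 − z√(z² − 1) + log( z + √(z² − 1) ) ) − (1/2) log( ( z + √(z² − 1) )/(2z) ) | ≤ C/n. -/
open Finset

lemma aux_taylor {f f' : ℝ → ℝ} {M a b : ℝ} (hM : 0 ≤ M)
    (hf : ∀ x ∈ Set.Icc a b, HasDerivAt f (f' x) x)
    (hlip : ∀ x ∈ Set.Icc a b, ∀ y ∈ Set.Icc a b, |f' x - f' y| ≤ M * |x - y|)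
    {m t : ℝ} (hm : m ∈ Set.Icc a b) (ht : t ∈ Set.Icc a b) :
    |f t - f m - f' m * (t - m)| ≤ M * (t - m) ^ 2 := by
  have hsub : Set.uIcc m t ⊆ Set.Icc a b := Set.uIcc_subset_Icc hm ht
  have hg : ∀ x ∈ Set.uIcc m t,
      HasDerivWithinAt (fun y => f y - f' m * y) (f' x - f' m) (Set.uIcc m t) x := by
    intro x hx
    have h1 := (hf x (hsub hx)).sub ((hasDerivAt_id x).const_mul (f' m))
    exact (by simpa using h1.hasDerivWithinAt : HasDerivWithinAt (f - fun y => f' m * y) (f' x - f' m) (Set.uIcc m t) x)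
  have hbound : ∀ x ∈ Set.uIcc m t, ‖f' x - f' m‖ ≤ M * |t - m| := by
    intro x hx
    have h1 := hlip x (hsub hx) m hm
    have h2 : |x - m| ≤ |t - m| := by
      rcases le_total m t with h | h
      · rw [Set.uIcc_of_le h] at hx
        rw [abs_of_nonneg (by linarith [hx.1]), abs_of_nonneg (by linarith)]
        linarith [hx.2]
      · rw [Set.uIcc_of_ge h] at hx
        rw [abs_of_nonpos (by linarith [hx.2]), abs_of_nonpos (by linarith)]
        linarith [hx.1]
    calc ‖f' x - f' m‖ = |f' x - f' m| := rfl
      _ ≤ M * |x - m| := h1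
      _ ≤ M * |t - m| := by nlinarith
  have key := (convex_uIcc m t).norm_image_sub_le_of_norm_hasDerivWithin_le hg hbound
    Set.left_mem_uIcc Set.right_mem_uIcc
  have : ‖(f t - f' m * t) - (f m - f' m * m)‖ = |f t - f m - f' m * (t - m)| := by
    congr 1; ring
  rw [this] at key
  calc |f t - f m - f' m * (t - m)| ≤ M * |t - m| * ‖t - m‖ := key
    _ = M * (t - m) ^ 2 := by rw [Real.norm_eq_abs, mul_assoc, ← abs_mul, abs_mul_self]; ring

lemma aux_trap {f f' : ℝ → ℝ} {M a b : ℝ} (hM : 0 ≤ M) (hab : a ≤ b)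
    (hf : ∀ x ∈ Set.Icc a b, HasDerivAt f (f' x) x)
    (hlip : ∀ x ∈ Set.Icc a b, ∀ y ∈ Set.Icc a b, |f' x - f' y| ≤ M * |x - y|) :
    |(∫ t in a..b, f t) - (b - a) * (f a + f b) / 2| ≤ M * (b - a) ^ 3 := by
  set m : ℝ := (a + b) / 2 with hm_def
  have hma : a ≤ m := by simp only [hm_def]; linarith
  have hmb : m ≤ b := by simp only [hm_def]; linarith
  have hm : m ∈ Set.Icc a b := ⟨hma, hmb⟩
  have ha : a ∈ Set.Icc a b := Set.left_mem_Icc.2 hab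
  have hb : b ∈ Set.Icc a b := Set.right_mem_Icc.2 hab
  -- endpoint estimate
  have hA := aux_taylor hM hf hlip hm ha
  have hB := aux_taylor hM hf hlip hm hb
  have hend : |f a + f b - 2 * f m| ≤ M * (b - a) ^ 2 / 2 := by
    have h1 : (a - m) ^ 2 = (b - a) ^ 2 / 4 := by simp only [hm_def]; ring
    have h2 : (b - m) ^ 2 = (b - a) ^ 2 / 4 := by simp only [hm_def]; ring
    have h3 : f a + f b - 2 * f m =
        (f a - f m - f' m * (a - m)) + (f b - f m - f' m * (b - m)) := by
      simp only [hm_def]; ring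
    rw [h3]
    calc |(f a - f m - f' m * (a - m)) + (f b - f m - f' m * (b - m))|
        ≤ |f a - f m - f' m * (a - m)| + |f b - f m - f' m * (b - m)| := abs_add_le _ _
      _ ≤ M * (a - m) ^ 2 + M * (b - m) ^ 2 := add_le_add hA hB
      _ = M * (b - a) ^ 2 / 2 := by rw [h1, h2]; ring
  -- continuity and integrability
  have hcont : ContinuousOn f (Set.Icc a b) := fun x hx => (hf x hx).continuousAt.continuousWithinAt
  have hint : IntervalIntegrable f MeasureTheory.volume a b := by
    apply ContinuousOn.intervalIntegrable
    rwa [Set.uIcc_of_le hab]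
  have hint2 : IntervalIntegrable (fun t => f m + f' m * (t - m)) MeasureTheory.volume a b :=
    (continuous_const.add (continuous_const.mul (continuous_id.sub continuous_const))).intervalIntegrable a b
  -- linear part integral
  have hlin : (∫ t in a..b, (f m + f' m * (t - m))) = (b - a) * f m := by
    have hder : ∀ t ∈ Set.uIcc a b,
        HasDerivAt (fun t => f m * t + f' m / 2 * (t - m) ^ 2) (f m + f' m * (t - m)) t := by
      intro t _
      have h1 : HasDerivAt (fun t : ℝ => f m * t) (f m) t := by
        simpa using (hasDerivAt_id t).const_mul (f m)
      have h2 : HasDerivAt (fun t : ℝ => t - m) 1 t := (hasDerivAt_id t).sub_const m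
      have h3 : HasDerivAt (fun t : ℝ => (t - m) ^ 2) (2 * (t - m)) t := by
        exact (by simpa using h2.pow 2 : HasDerivAt ((fun t => t - m) ^ 2) (2 * (t - m)) t)
      have h4 := h1.add (h3.const_mul (f' m / 2))
      refine h4.congr_deriv ?_
      ring
    rw [intervalIntegral.integral_eq_sub_of_hasDerivAt hder hint2]
    simp only [hm_def]
    ring
  -- remainder integral
  have hrem : |∫ t in a..b, (f t - (f m + f' m * (t - m)))| ≤ M * (b - a) ^ 2 / 4 * (b - a) := by
    have := intervalIntegral.norm_integral_le_of_norm_le_const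
      (C := M * (b - a) ^ 2 / 4) (f := fun t => f t - (f m + f' m * (t - m))) (a := a) (b := b) ?_
    · rwa [Real.norm_eq_abs, abs_of_nonneg (sub_nonneg.2 hab)] at this
    · intro x hx
      rw [Set.uIoc_of_le hab] at hx
      have hx' : x ∈ Set.Icc a b := Set.Ioc_subset_Icc_self hx
      have h1 := aux_taylor hM hf hlip hm hx'
      have h2 : (x - m) ^ 2 ≤ (b - a) ^ 2 / 4 := by
        have := hx'.1; have := hx'.2
        simp only [hm_def]; nlinarith
      calc ‖f x - (f m + f' m * (x - m))‖ = |f x - f m - f' m * (x - m)| := by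
            rw [Real.norm_eq_abs]; congr 1; ring
        _ ≤ M * (x - m) ^ 2 := h1
        _ ≤ M * (b - a) ^ 2 / 4 := by nlinarith
  have hsplit : (∫ t in a..b, f t) - (b - a) * f m
      = ∫ t in a..b, (f t - (f m + f' m * (t - m))) := by
    rw [intervalIntegral.integral_sub hint hint2, hlin]
  have hfinal : (∫ t in a..b, f t) - (b - a) * (f a + f b) / 2
      = ((∫ t in a..b, f t) - (b - a) * f m) - (b - a) / 2 * (f a + f b - 2 * f m) := by ring
  rw [hfinal, hsplit]
  have h5 : |(b - a) / 2 * (f a + f b - 2 * f m)| ≤ (b - a) / 2 * (M * (b - a) ^ 2 / 2) := by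
    rw [abs_mul, abs_of_nonneg (by linarith : (0:ℝ) ≤ (b - a)/2)]
    exact mul_le_mul_of_nonneg_left hend (by linarith)
  calc |(∫ t in a..b, (f t - (f m + f' m * (t - m)))) - (b - a) / 2 * (f a + f b - 2 * f m)|
      ≤ |∫ t in a..b, (f t - (f m + f' m * (t - m)))| + |(b - a) / 2 * (f a + f b - 2 * f m)| :=
        abs_sub _ _
    _ ≤ M * (b - a) ^ 2 / 4 * (b - a) + (b - a) / 2 * (M * (b - a) ^ 2 / 2) := add_le_add hrem h5
    _ ≤ M * (b - a) ^ 3 := by nlinarith [sq_nonneg (b-a), pow_nonneg (by linarith : (0:ℝ) ≤ b - a) 3]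

lemma aux_sum {f f' : ℝ → ℝ} {M : ℝ} (hM : 0 ≤ M) {n : ℕ} (hn : 1 ≤ n)
    (hf : ∀ x ∈ Set.Icc (0:ℝ) 1, HasDerivAt f (f' x) x)
    (hlip : ∀ x ∈ Set.Icc (0:ℝ) 1, ∀ y ∈ Set.Icc (0:ℝ) 1, |f' x - f' y| ≤ M * |x - y|) :
    |(∑ k ∈ Finset.Icc 1 n, f ((k:ℝ)/(n:ℝ))) - (n:ℝ) * (∫ t in (0:ℝ)..1, f t)
      - (f 1 - f 0)/2| ≤ M / n := by
  have hn0 : (0:ℝ) < n := by exact_mod_cast hn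
  have hne : (n:ℝ) ≠ 0 := ne_of_gt hn0
  set a : ℕ → ℝ := fun k => (k:ℝ) / n with ha_def
  have ha0 : a 0 = 0 := by simp [ha_def]
  have han : a n = 1 := by simp [ha_def, hne]
  have hstep : ∀ k : ℕ, a (k+1) - a k = 1 / n := by
    intro k; simp only [ha_def]; push_cast; field_simp; ring
  have hmem : ∀ k : ℕ, k ≤ n → a k ∈ Set.Icc (0:ℝ) 1 := by
    intro k hk
    constructor
    · positivity
    · rw [div_le_one hn0]; exact_mod_cast hk
  have hmono : ∀ k : ℕ, a k ≤ a (k+1) := by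
    intro k
    have := hstep k
    have : (0:ℝ) < 1/n := by positivity
    nlinarith [hstep k]
  -- per-interval bounds
  have hper : ∀ k < n, |(∫ t in a k..a (k+1), f t)
      - (a (k+1) - a k) * (f (a k) + f (a (k+1))) / 2| ≤ M * (1/n) ^ 3 := by
    intro k hk
    have hsub : Set.Icc (a k) (a (k+1)) ⊆ Set.Icc (0:ℝ) 1 :=
      Set.Icc_subset_Icc (hmem k (le_of_lt hk)).1 (hmem (k+1) hk).2
    have h := aux_trap (f := f) (f' := f') hM (hmono k)
      (fun x hx => hf x (hsub hx)) (fun x hx y hy => hlip x (hsub hx) y (hsub hy))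
    rw [hstep k] at h ⊢
    exact h
  -- integrability per interval
  have hintk : ∀ k < n, IntervalIntegrable f MeasureTheory.volume (a k) (a (k+1)) := by
    intro k hk
    apply ContinuousOn.intervalIntegrable
    intro x hx
    rw [Set.uIcc_of_le (hmono k)] at hx
    have hx' : x ∈ Set.Icc (0:ℝ) 1 :=
      Set.Icc_subset_Icc (hmem k (le_of_lt hk)).1 (hmem (k+1) hk).2 hx
    exact (hf x hx').continuousAt.continuousWithinAt
  have hsum1 : ∑ k ∈ Finset.range n, ∫ t in a k..a (k+1), f t = ∫ t in (0:ℝ)..1, f t := by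
    rw [intervalIntegral.sum_integral_adjacent_intervals hintk, ha0, han]
  set T : ℝ := ∑ k ∈ Finset.range n, (a (k+1) - a k) * (f (a k) + f (a (k+1))) / 2 with hT_def
  have habs : |(∫ t in (0:ℝ)..1, f t) - T| ≤ (n:ℝ) * (M * (1/n) ^ 3) := by
    rw [← hsum1, hT_def, ← Finset.sum_sub_distrib]
    calc |∑ k ∈ Finset.range n, ((∫ t in a k..a (k+1), f t)
          - (a (k+1) - a k) * (f (a k) + f (a (k+1))) / 2)|
        ≤ ∑ k ∈ Finset.range n, |(∫ t in a k..a (k+1), f t)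
          - (a (k+1) - a k) * (f (a k) + f (a (k+1))) / 2| := Finset.abs_sum_le_sum_abs _ _
      _ ≤ ∑ _k ∈ Finset.range n, M * (1/n) ^ 3 := by
          apply Finset.sum_le_sum
          intro k hk
          exact hper k (Finset.mem_range.1 hk)
      _ = (n:ℝ) * (M * (1/n) ^ 3) := by rw [Finset.sum_const, Finset.card_range]; simp
  -- identify T with the sum
  have hshift : ∑ k ∈ Finset.range n, f (a k) + f (a n)
      = (∑ k ∈ Finset.range n, f (a (k+1))) + f (a 0) := by
    have e1 := Finset.sum_range_succ (fun k => f (a k)) n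
    have e2 := Finset.sum_range_succ' (fun k => f (a k)) n
    rw [e1] at e2
    linarith [e2]
  have hIcc : ∑ k ∈ Finset.Icc 1 n, f ((k:ℝ)/(n:ℝ)) = ∑ k ∈ Finset.range n, f (a (k+1)) := by
    rw [← Finset.Ico_add_one_right_eq_Icc, Finset.sum_Ico_eq_sum_range]
    simp only [Nat.add_sub_cancel, ha_def]
    apply Finset.sum_congr rfl
    intro k _
    congr 2
    push_cast
    ring
  have hT : T = (1/n) * ((∑ k ∈ Finset.Icc 1 n, f ((k:ℝ)/(n:ℝ))) - (f 1 - f 0)/2) := by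
    rw [hT_def, hIcc]
    have : ∀ k ∈ Finset.range n, (a (k+1) - a k) * (f (a k) + f (a (k+1))) / 2
        = (1/n) * ((f (a k) + f (a (k+1))) / 2) := by
      intro k _
      rw [hstep k]; ring
    rw [Finset.sum_congr rfl this]
    rw [← Finset.mul_sum]
    have hsplit : ∑ k ∈ Finset.range n, (f (a k) + f (a (k+1))) / 2
        = ((∑ k ∈ Finset.range n, f (a k)) + ∑ k ∈ Finset.range n, f (a (k+1))) / 2 := by
      rw [← Finset.sum_add_distrib, ← Finset.sum_div]
    rw [hsplit]
    have := hshift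
    rw [ha0, han] at this
    have e3 : ∑ k ∈ Finset.range n, f (a k)
        = (∑ k ∈ Finset.range n, f (a (k+1))) + f 0 - f 1 := by linarith
    rw [e3]
    ring
  -- conclude
  have hfin : (∑ k ∈ Finset.Icc 1 n, f ((k:ℝ)/(n:ℝ))) - (n:ℝ) * (∫ t in (0:ℝ)..1, f t)
      - (f 1 - f 0)/2 = -((n:ℝ) * ((∫ t in (0:ℝ)..1, f t) - T)) := by
    rw [hT]
    field_simp
    ring
  rw [hfin, abs_neg, abs_mul, abs_of_nonneg (le_of_lt hn0)]
  calc (n:ℝ) * |(∫ t in (0:ℝ)..1, f t) - T| ≤ (n:ℝ) * ((n:ℝ) * (M * (1/n) ^ 3)) :=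
        mul_le_mul_of_nonneg_left habs (le_of_lt hn0)
    _ = M / n := by field_simp

lemma sqrt_deriv (z t : ℝ) (hpos : 0 < z ^ 2 - t) :
    HasDerivAt (fun t => Real.sqrt (z ^ 2 - t)) (-(1 / (2 * Real.sqrt (z ^ 2 - t)))) t := by
  have hinner : HasDerivAt (fun t : ℝ => z ^ 2 - t) (-1) t := by
    simpa using (hasDerivAt_id t).const_sub (z ^ 2)
  have h := (Real.hasDerivAt_sqrt (ne_of_gt hpos)).comp t hinner
  refine h.congr_deriv ?_
  ring

lemma hasDeriv_f (z t : ℝ) (hz : 0 < z) (hpos : 0 < z ^ 2 - t) :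
    HasDerivAt (fun t => Real.log (z + Real.sqrt (z ^ 2 - t)))
      (-(1 / (2 * Real.sqrt (z ^ 2 - t) * (z + Real.sqrt (z ^ 2 - t))))) t := by
  have hs0 : 0 < Real.sqrt (z ^ 2 - t) := Real.sqrt_pos.2 hpos
  have hzs : 0 < z + Real.sqrt (z ^ 2 - t) := by linarith
  have hadd : HasDerivAt (fun t => z + Real.sqrt (z ^ 2 - t))
      (-(1 / (2 * Real.sqrt (z ^ 2 - t)))) t := by
    exact (sqrt_deriv z t hpos).const_add z
  have h := (Real.hasDerivAt_log (ne_of_gt hzs)).comp t hadd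
  refine h.congr_deriv ?_
  field_simp

lemma hasDeriv_f' (z t : ℝ) (hz : 0 < z) (hpos : 0 < z ^ 2 - t) :
    HasDerivAt (fun t => -(1 / (2 * Real.sqrt (z ^ 2 - t) * (z + Real.sqrt (z ^ 2 - t)))))
      (-((z + 2 * Real.sqrt (z ^ 2 - t)) / Real.sqrt (z ^ 2 - t)
        / (2 * Real.sqrt (z ^ 2 - t) * (z + Real.sqrt (z ^ 2 - t))) ^ 2)) t := by
  have hs0 : 0 < Real.sqrt (z ^ 2 - t) := Real.sqrt_pos.2 hpos
  have hzs : 0 < z + Real.sqrt (z ^ 2 - t) := by linarith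
  have hu0 : 2 * Real.sqrt (z ^ 2 - t) * (z + Real.sqrt (z ^ 2 - t)) ≠ 0 := by positivity
  have hadd : HasDerivAt (fun t => z + Real.sqrt (z ^ 2 - t))
      (-(1 / (2 * Real.sqrt (z ^ 2 - t)))) t := by
    exact (sqrt_deriv z t hpos).const_add z
  have hu : HasDerivAt (fun t => 2 * Real.sqrt (z ^ 2 - t) * (z + Real.sqrt (z ^ 2 - t)))
      ((2 * (-(1 / (2 * Real.sqrt (z ^ 2 - t))))) * (z + Real.sqrt (z ^ 2 - t))
        + (2 * Real.sqrt (z ^ 2 - t)) * (-(1 / (2 * Real.sqrt (z ^ 2 - t))))) t :=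
    ((sqrt_deriv z t hpos).const_mul 2).mul hadd
  have hinv := (hu.inv hu0).neg
  have h1 : ∀ x : ℝ, -(1 / (2 * Real.sqrt (z ^ 2 - x) * (z + Real.sqrt (z ^ 2 - x))))
      = -(2 * Real.sqrt (z ^ 2 - x) * (z + Real.sqrt (z ^ 2 - x)))⁻¹ := by
    intro x; rw [one_div]
  simp only [h1]
  refine hinv.congr_deriv ?_
  have hsne : Real.sqrt (z ^ 2 - t) ≠ 0 := ne_of_gt hs0
  have hzsne : z + Real.sqrt (z ^ 2 - t) ≠ 0 := ne_of_gt hzs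
  field_simp
  ring

lemma hasDeriv_F (z t : ℝ) (hz : 0 < z) (hpos : 0 < z ^ 2 - t) :
    HasDerivAt (fun t => t * Real.log (z + Real.sqrt (z ^ 2 - t)) + (z ^ 2 - t) / 2
        - z * Real.sqrt (z ^ 2 - t))
      (Real.log (z + Real.sqrt (z ^ 2 - t))) t := by
  have hs0 : 0 < Real.sqrt (z ^ 2 - t) := Real.sqrt_pos.2 hpos
  have hzs : 0 < z + Real.sqrt (z ^ 2 - t) := by linarith
  have hsq : Real.sqrt (z ^ 2 - t) ^ 2 = z ^ 2 - t := Real.sq_sqrt (le_of_lt hpos)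
  have h1 := (hasDerivAt_id t).mul (hasDeriv_f z t hz hpos)
  have h2 : HasDerivAt (fun t : ℝ => (z ^ 2 - t) / 2) (-1 / 2) t := by
    have hinner : HasDerivAt (fun t : ℝ => z ^ 2 - t) (-1) t := by
      simpa using (hasDerivAt_id t).const_sub (z ^ 2)
    exact hinner.div_const 2
  have h3 := (sqrt_deriv z t hpos).const_mul z
  have h := (h1.add h2).sub h3
  refine h.congr_deriv ?_
  have hsne : Real.sqrt (z ^ 2 - t) ≠ 0 := ne_of_gt hs0
  have hzsne : z + Real.sqrt (z ^ 2 - t) ≠ 0 := ne_of_gt hzs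
  field_simp
  nlinarith [hsq, show id t = t from rfl]

/-- For all `δ > 0` and `R > 1+δ` there exist `C > 0` and `n₀` such that for all
integers `n ≥ n₀` and all real `z ∈ [1+δ, R]`:
`| Σ_{k=1}^n log(z + √(z² − k/n)) − n(z² − 1/2 − z√(z² − 1) + log(z + √(z² − 1)))
   − (1/2) log((z + √(z² − 1))/(2z)) | ≤ C/n`. -/
theorem stmt_15 (δ R : ℝ) (hδ : 0 < δ) (hR : 1 + δ < R) :
    ∃ C > 0, ∃ n₀ : ℕ, ∀ n : ℕ, n₀ ≤ n →
      ∀ z : ℝ, 1 + δ ≤ z → z ≤ R →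
        |(∑ k ∈ Finset.Icc 1 n, Real.log (z + Real.sqrt (z ^ 2 - (k : ℝ) / (n : ℝ))))
            - (n : ℝ) * (z ^ 2 - 1/2 - z * Real.sqrt (z ^ 2 - 1)
                + Real.log (z + Real.sqrt (z ^ 2 - 1)))
            - (1/2) * Real.log ((z + Real.sqrt (z ^ 2 - 1)) / (2 * z))|
          ≤ C / (n : ℝ) := by
  have hR0 : 0 < R := by linarith
  set c : ℝ := Real.sqrt δ with hc_def
  have hc : 0 < c := Real.sqrt_pos.2 hδ
  set M : ℝ := 3 * R / (4 * c ^ 3) with hM_def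
  have hM : 0 < M := by positivity
  refine ⟨M, hM, 1, ?_⟩
  intro n hn z hz1 hz2
  have hz0 : 0 < z := by linarith
  have hzone : 1 ≤ z := by linarith
  have hkey : ∀ t ∈ Set.Icc (0:ℝ) 1, δ ≤ z ^ 2 - t := by
    intro t ht
    nlinarith [ht.2, hδ]
  have hpos : ∀ t ∈ Set.Icc (0:ℝ) 1, 0 < z ^ 2 - t := fun t ht =>
    lt_of_lt_of_le hδ (hkey t ht)
  have hslb : ∀ t ∈ Set.Icc (0:ℝ) 1, c ≤ Real.sqrt (z ^ 2 - t) := fun t ht =>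
    Real.sqrt_le_sqrt (hkey t ht)
  have hsub' : ∀ t ∈ Set.Icc (0:ℝ) 1, Real.sqrt (z ^ 2 - t) ≤ z := by
    intro t ht
    calc Real.sqrt (z ^ 2 - t) ≤ Real.sqrt (z ^ 2) := Real.sqrt_le_sqrt (by linarith [ht.1])
      _ = z := Real.sqrt_sq hz0.le
  -- bound on second derivative
  have hf''bound : ∀ x ∈ Set.Icc (0:ℝ) 1,
      ‖-((z + 2 * Real.sqrt (z ^ 2 - x)) / Real.sqrt (z ^ 2 - x)
        / (2 * Real.sqrt (z ^ 2 - x) * (z + Real.sqrt (z ^ 2 - x))) ^ 2)‖ ≤ M := by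
    intro x hx
    set s : ℝ := Real.sqrt (z ^ 2 - x) with hs_def
    have hs1 : c ≤ s := hslb x hx
    have hs2 : s ≤ z := hsub' x hx
    have hs0 : 0 < s := lt_of_lt_of_le hc hs1
    have hzs : 1 ≤ z + s := by linarith
    rw [Real.norm_eq_abs, abs_neg, abs_of_nonneg (by positivity)]
    have e1 : (z + 2 * s) / s ≤ 3 * R / c :=
      div_le_div₀ (by positivity) (by linarith) hc hs1
    have e2a : c ^ 2 ≤ s ^ 2 := by nlinarith
    have e2b : 1 ≤ (z + s) ^ 2 := by nlinarith
    have e2 : 4 * c ^ 2 ≤ (2 * s * (z + s)) ^ 2 := by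
      have h := mul_le_mul e2a e2b zero_le_one (sq_nonneg s)
      calc 4 * c ^ 2 = 4 * (c ^ 2 * 1) := by ring
        _ ≤ 4 * (s ^ 2 * (z + s) ^ 2) := by linarith
        _ = (2 * s * (z + s)) ^ 2 := by ring
    calc (z + 2 * s) / s / (2 * s * (z + s)) ^ 2
        ≤ (3 * R / c) / (4 * c ^ 2) :=
          div_le_div₀ (by positivity) e1 (by positivity) e2
      _ = M := by rw [hM_def]; field_simp
  -- Lipschitz bound for f'
  have hlip : ∀ x ∈ Set.Icc (0:ℝ) 1, ∀ y ∈ Set.Icc (0:ℝ) 1,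
      |(-(1 / (2 * Real.sqrt (z ^ 2 - x) * (z + Real.sqrt (z ^ 2 - x)))))
        - (-(1 / (2 * Real.sqrt (z ^ 2 - y) * (z + Real.sqrt (z ^ 2 - y)))))|
        ≤ M * |x - y| := by
    intro x hx y hy
    have h := (convex_Icc (0:ℝ) 1).norm_image_sub_le_of_norm_hasDerivWithin_le
      (f := fun u => -(1 / (2 * Real.sqrt (z ^ 2 - u) * (z + Real.sqrt (z ^ 2 - u)))))
      (f' := fun u => -((z + 2 * Real.sqrt (z ^ 2 - u)) / Real.sqrt (z ^ 2 - u)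
        / (2 * Real.sqrt (z ^ 2 - u) * (z + Real.sqrt (z ^ 2 - u))) ^ 2))
      (fun u hu => (hasDeriv_f' z u hz0 (hpos u hu)).hasDerivWithinAt)
      (fun u hu => hf''bound u hu) hy hx
    simpa [Real.norm_eq_abs, abs_sub_comm] using h
  -- main estimate from aux_sum
  have haux := aux_sum (f := fun t => Real.log (z + Real.sqrt (z ^ 2 - t)))
    (f' := fun x => -(1 / (2 * Real.sqrt (z ^ 2 - x) * (z + Real.sqrt (z ^ 2 - x)))))
    hM.le hn (fun x hx => hasDeriv_f z x hz0 (hpos x hx)) hlip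
  -- integrability
  have hint : IntervalIntegrable (fun t => Real.log (z + Real.sqrt (z ^ 2 - t)))
      MeasureTheory.volume 0 1 := by
    apply ContinuousOn.intervalIntegrable
    intro x hx
    rw [Set.uIcc_of_le zero_le_one] at hx
    exact ((hasDeriv_f z x hz0 (hpos x hx)).continuousAt).continuousWithinAt
  -- value of the integral
  have h0 : Real.sqrt (z ^ 2 - 0) = z := by rw [sub_zero, Real.sqrt_sq hz0.le]
  have hI : (∫ t in (0:ℝ)..1, Real.log (z + Real.sqrt (z ^ 2 - t)))
      = z ^ 2 - 1/2 - z * Real.sqrt (z ^ 2 - 1) + Real.log (z + Real.sqrt (z ^ 2 - 1)) := by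
    rw [intervalIntegral.integral_eq_sub_of_hasDerivAt
      (f := fun t => t * Real.log (z + Real.sqrt (z ^ 2 - t)) + (z ^ 2 - t) / 2
        - z * Real.sqrt (z ^ 2 - t))
      (fun x hx => hasDeriv_F z x hz0 (hpos x (by rwa [Set.uIcc_of_le zero_le_one] at hx)))
      hint]
    simp only [sub_zero, Real.sqrt_sq hz0.le, one_mul, zero_mul, zero_add]
    ring
  -- endpoint difference
  have hne1 : z + Real.sqrt (z ^ 2 - 1) ≠ 0 := by positivity
  have hf10 : Real.log (z + Real.sqrt (z ^ 2 - 1)) - Real.log (z + Real.sqrt (z ^ 2 - 0))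
      = Real.log ((z + Real.sqrt (z ^ 2 - 1)) / (2 * z)) := by
    rw [h0, show z + z = 2 * z from by ring] at *
    rw [Real.log_div hne1 (by positivity)]
  have heq2 : (∑ k ∈ Finset.Icc 1 n, Real.log (z + Real.sqrt (z ^ 2 - (k : ℝ) / (n : ℝ))))
      - (n : ℝ) * (z ^ 2 - 1/2 - z * Real.sqrt (z ^ 2 - 1)
        + Real.log (z + Real.sqrt (z ^ 2 - 1)))
      - (1/2) * Real.log ((z + Real.sqrt (z ^ 2 - 1)) / (2 * z))
      = (∑ k ∈ Finset.Icc 1 n, Real.log (z + Real.sqrt (z ^ 2 - (k : ℝ) / (n : ℝ))))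
      - (n : ℝ) * (∫ t in (0:ℝ)..1, Real.log (z + Real.sqrt (z ^ 2 - t)))
      - (Real.log (z + Real.sqrt (z ^ 2 - 1)) - Real.log (z + Real.sqrt (z ^ 2 - 0))) / 2 := by
    rw [hI, hf10]
    ring
  rw [heq2]
  exact haux
end

section
/- Define U : (−1, ∞) → ℝ by U(t) = ( (3/2)( t√(t²−1) − log(t + √(t²−1)) ) )^{2/3} for t ≥ 1 and U(t) = −( (3/2)( arccos t − t√(1−t²) ) )^{2/3} for −1 < t < 1. Then: (i) t√(t²−1) − log(t + √(t²−1)) ≥ 0 for all t ≥ 1 and arccos t − t√(1−t²) ≥ 0 for all −1 < t < 1, so U is well defined; (ii) U is continuous on (−1, ∞); (iii) U(t)/(t−1) → 2 as t → 1 (equivalently U(t) = 2(t−1) + O((t−1)²) as t → 1); and (iv) there exists δ > 0 such that U is strictly increasing on [1−δ, 1+δ]. -/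
open Real Filter Topology

noncomputable def fA (t : ℝ) : ℝ := t * Real.sqrt (t^2 - 1) - Real.log (t + Real.sqrt (t^2 - 1))
noncomputable def gA (t : ℝ) : ℝ := Real.arccos t - t * Real.sqrt (1 - t^2)

lemma fA_one : fA 1 = 0 := by simp [fA]

lemma gA_one : gA 1 = 0 := by simp [gA, Real.arccos_one]

lemma sqrt_sq_sub_pos {t : ℝ} (h : 1 < t) : 0 < Real.sqrt (t^2 - 1) :=
  Real.sqrt_pos.2 (by nlinarith)

lemma hasDerivAt_fA {t : ℝ} (h : 1 < t) : HasDerivAt fA (2 * Real.sqrt (t^2 - 1)) t := by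
  have hs : (0:ℝ) < Real.sqrt (t^2 - 1) := sqrt_sq_sub_pos h
  have hsq : Real.sqrt (t^2-1) ^ 2 = t^2 - 1 := Real.sq_sqrt (by nlinarith)
  have h1 : HasDerivAt (fun t : ℝ => t^2 - 1) (2*t) t := by
    simpa using ((hasDerivAt_pow 2 t).sub_const 1)
  have h2 : HasDerivAt (fun t : ℝ => Real.sqrt (t^2-1)) (2*t / (2 * Real.sqrt (t^2-1))) t :=
    h1.sqrt (by nlinarith)
  have h3 : HasDerivAt (fun t : ℝ => t * Real.sqrt (t^2-1))
      (1 * Real.sqrt (t^2-1) + t * (2*t / (2 * Real.sqrt (t^2-1)))) t :=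
    (hasDerivAt_id t).mul h2
  have hpos : t + Real.sqrt (t^2-1) ≠ 0 := by positivity
  have h4 : HasDerivAt (fun t : ℝ => Real.log (t + Real.sqrt (t^2-1)))
      ((1 + 2*t / (2 * Real.sqrt (t^2-1))) / (t + Real.sqrt (t^2-1))) t :=
    ((hasDerivAt_id t).add h2).log hpos
  have := h3.sub h4
  refine this.congr_deriv ?_
  have hne := hs.ne'
  field_simp
  nlinarith [hsq, hs, sq_nonneg (t + Real.sqrt (t^2-1))]

lemma hasDerivAt_gA {t : ℝ} (h1 : -1 < t) (h2 : t < 1) :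
    HasDerivAt gA (-(2 * Real.sqrt (1 - t^2))) t := by
  have hs : (0:ℝ) < Real.sqrt (1 - t^2) := Real.sqrt_pos.2 (by nlinarith)
  have hsq : Real.sqrt (1-t^2) ^ 2 = 1 - t^2 := Real.sq_sqrt (by nlinarith)
  have ha : HasDerivAt Real.arccos (-(1 / Real.sqrt (1 - t^2))) t :=
    Real.hasDerivAt_arccos h1.ne' h2.ne
  have h0 : HasDerivAt (fun t : ℝ => 1 - t^2) (-(2*t)) t := by
    simpa using ((hasDerivAt_pow 2 t).const_sub 1)
  have hsd : HasDerivAt (fun t : ℝ => Real.sqrt (1 - t^2)) (-(2*t) / (2 * Real.sqrt (1-t^2))) t :=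
    h0.sqrt (by nlinarith)
  have hm : HasDerivAt (fun t : ℝ => t * Real.sqrt (1 - t^2))
      (1 * Real.sqrt (1-t^2) + t * (-(2*t) / (2 * Real.sqrt (1-t^2)))) t :=
    (hasDerivAt_id t).mul hsd
  refine (ha.sub hm).congr_deriv ?_
  have hne := hs.ne'
  field_simp
  nlinarith [hsq, hs]

lemma hasDerivAt_p32 {t : ℝ} (h : 1 < t) :
    HasDerivAt (fun t : ℝ => (t-1) * Real.sqrt (t-1)) (3/2 * Real.sqrt (t-1)) t := by
  have hp : (0:ℝ) < t - 1 := by linarith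
  have hs : (0:ℝ) < Real.sqrt (t-1) := Real.sqrt_pos.2 hp
  have hsq : Real.sqrt (t-1) ^ 2 = t - 1 := Real.sq_sqrt hp.le
  have h0 : HasDerivAt (fun t : ℝ => t - 1) 1 t := (hasDerivAt_id t).sub_const 1
  have h1 : HasDerivAt (fun t : ℝ => Real.sqrt (t-1)) (1 / (2 * Real.sqrt (t-1))) t :=
    h0.sqrt hp.ne'
  have h2 := h0.mul h1
  refine h2.congr_deriv ?_
  have hne := hs.ne'
  field_simp
  nlinarith [hsq]

lemma hasDerivAt_p52 {t : ℝ} (h : 1 < t) :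
    HasDerivAt (fun t : ℝ => (t-1)^2 * Real.sqrt (t-1)) (5/2 * ((t-1) * Real.sqrt (t-1))) t := by
  have hp : (0:ℝ) < t - 1 := by linarith
  have hs : (0:ℝ) < Real.sqrt (t-1) := Real.sqrt_pos.2 hp
  have hsq : Real.sqrt (t-1) ^ 2 = t - 1 := Real.sq_sqrt hp.le
  have h0 : HasDerivAt (fun t : ℝ => t - 1) 1 t := (hasDerivAt_id t).sub_const 1
  have hq : HasDerivAt (fun t : ℝ => (t-1)^2) (2*(t-1)) t := by
    have := (hasDerivAt_pow 2 (t-1)).comp t h0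
    simpa [mul_comm, Function.comp_def] using this
  have h1 : HasDerivAt (fun t : ℝ => Real.sqrt (t-1)) (1 / (2 * Real.sqrt (t-1))) t :=
    h0.sqrt hp.ne'
  have h2 := hq.mul h1
  refine h2.congr_deriv ?_
  have hne := hs.ne'
  field_simp
  nlinarith [hsq]

lemma hasDerivAt_q32 {t : ℝ} (h : t < 1) :
    HasDerivAt (fun t : ℝ => (1-t) * Real.sqrt (1-t)) (-(3/2 * Real.sqrt (1-t))) t := by
  have hp : (0:ℝ) < 1 - t := by linarith
  have hs : (0:ℝ) < Real.sqrt (1-t) := Real.sqrt_pos.2 hp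
  have hsq : Real.sqrt (1-t) ^ 2 = 1 - t := Real.sq_sqrt hp.le
  have h0 : HasDerivAt (fun t : ℝ => 1 - t) (-1) t := by
    simpa using (hasDerivAt_id t).const_sub 1
  have h1 : HasDerivAt (fun t : ℝ => Real.sqrt (1-t)) (-1 / (2 * Real.sqrt (1-t))) t :=
    h0.sqrt hp.ne'
  have h2 := h0.mul h1
  refine h2.congr_deriv ?_
  have hne := hs.ne'
  field_simp
  nlinarith [hsq]

lemma hasDerivAt_q52 {t : ℝ} (h : t < 1) :
    HasDerivAt (fun t : ℝ => (1-t)^2 * Real.sqrt (1-t)) (-(5/2 * ((1-t) * Real.sqrt (1-t)))) t := by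
  have hp : (0:ℝ) < 1 - t := by linarith
  have hs : (0:ℝ) < Real.sqrt (1-t) := Real.sqrt_pos.2 hp
  have hsq : Real.sqrt (1-t) ^ 2 = 1 - t := Real.sq_sqrt hp.le
  have h0 : HasDerivAt (fun t : ℝ => 1 - t) (-1) t := by
    simpa using (hasDerivAt_id t).const_sub 1
  have hq : HasDerivAt (fun t : ℝ => (1-t)^2) (2*(1-t)*(-1)) t := by
    have := (hasDerivAt_pow 2 (1-t)).comp t h0
    simpa [mul_comm, Function.comp_def] using this
  have h1 : HasDerivAt (fun t : ℝ => Real.sqrt (1-t)) (-1 / (2 * Real.sqrt (1-t))) t :=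
    h0.sqrt hp.ne'
  have h2 := hq.mul h1
  refine h2.congr_deriv ?_
  have hne := hs.ne'
  field_simp
  nlinarith [hsq]

lemma contOn_fA : ContinuousOn fA (Set.Ici 1) := by
  have c1 : Continuous fun t : ℝ => t * Real.sqrt (t^2 - 1) :=
    continuous_id.mul (((continuous_pow 2).sub continuous_const).sqrt)
  have c2 : ContinuousOn (fun t : ℝ => Real.log (t + Real.sqrt (t^2 - 1))) (Set.Ici 1) := by
    apply ContinuousOn.log
    · exact (continuous_id.add ((continuous_pow 2).sub continuous_const).sqrt).continuousOn
    · intro x hx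
      simp only [Set.mem_Ici] at hx
      have := Real.sqrt_nonneg (x^2-1)
      positivity
  exact c1.continuousOn.sub c2

lemma sqrt_fac1 {t : ℝ} (h : 1 ≤ t) : Real.sqrt (t^2-1) = Real.sqrt (t-1) * Real.sqrt (t+1) := by
  rw [← Real.sqrt_mul (by linarith : (0:ℝ) ≤ t - 1)]
  ring_nf

lemma sqrt_fac2 {t : ℝ} (h : t ≤ 1) : Real.sqrt (1-t^2) = Real.sqrt (1-t) * Real.sqrt (1+t) := by
  rw [← Real.sqrt_mul (by linarith : (0:ℝ) ≤ 1 - t)]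
  ring_nf

lemma sqrt_two_le_sqrt_add {t : ℝ} (h : 1 ≤ t) : Real.sqrt 2 ≤ Real.sqrt (t+1) :=
  Real.sqrt_le_sqrt (by linarith)

lemma ineqA {t : ℝ} (h : 1 ≤ t) : 2*Real.sqrt 2*((t-1)*Real.sqrt (t-1)) ≤ 3/2 * fA t := by
  set F : ℝ → ℝ := fun t => 3/2 * fA t - 2*Real.sqrt 2*((t-1)*Real.sqrt (t-1)) with hF
  have hd : ∀ x ∈ Set.Ioi (1:ℝ), HasDerivAt F
      (3/2 * (2*Real.sqrt (x^2-1)) - 2*Real.sqrt 2*(3/2 * Real.sqrt (x-1))) x := by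
    intro x hx
    exact ((hasDerivAt_fA hx).const_mul (3/2)).sub ((hasDerivAt_p32 hx).const_mul (2*Real.sqrt 2))
  have hmono : MonotoneOn F (Set.Ici 1) := by
    apply monotoneOn_of_deriv_nonneg (convex_Ici 1)
    · exact (contOn_fA.const_smul (3/2 : ℝ)).sub
        (((continuous_const.mul ((continuous_id.sub continuous_const).mul
          ((continuous_id.sub continuous_const).sqrt)))).continuousOn)
    · rw [interior_Ici]
      intro x hx
      exact (hd x hx).differentiableAt.differentiableWithinAt
    · rw [interior_Ici]
      intro x hx
      rw [(hd x hx).deriv]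
      have hx1 : (1:ℝ) ≤ x := le_of_lt hx
      rw [sqrt_fac1 hx1]
      have h2 := sqrt_two_le_sqrt_add hx1
      have hs : 0 ≤ Real.sqrt (x-1) := Real.sqrt_nonneg _
      nlinarith
  have := hmono (Set.self_mem_Ici) h h
  have hF1 : F 1 = 0 := by simp [hF, fA_one]
  rw [hF1] at this
  simp only [hF] at this
  linarith

lemma ineqB {t : ℝ} (h : 1 ≤ t) :
    3/2 * fA t ≤ 2*Real.sqrt 2*((t-1)*Real.sqrt (t-1)) + (3*Real.sqrt 2/5)*((t-1)^2*Real.sqrt (t-1)) := by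
  set F : ℝ → ℝ := fun t => 2*Real.sqrt 2*((t-1)*Real.sqrt (t-1))
    + (3*Real.sqrt 2/5)*((t-1)^2*Real.sqrt (t-1)) - 3/2 * fA t with hF
  have hd : ∀ x ∈ Set.Ioi (1:ℝ), HasDerivAt F
      (2*Real.sqrt 2*(3/2 * Real.sqrt (x-1)) + (3*Real.sqrt 2/5)*(5/2 * ((x-1)*Real.sqrt (x-1)))
        - 3/2 * (2*Real.sqrt (x^2-1))) x := by
    intro x hx
    exact (((hasDerivAt_p32 hx).const_mul (2*Real.sqrt 2)).add
      ((hasDerivAt_p52 hx).const_mul (3*Real.sqrt 2/5))).sub ((hasDerivAt_fA hx).const_mul (3/2))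
  have hmono : MonotoneOn F (Set.Ici 1) := by
    apply monotoneOn_of_deriv_nonneg (convex_Ici 1)
    · apply ContinuousOn.sub _ (contOn_fA.const_smul (3/2 : ℝ))
      apply Continuous.continuousOn
      continuity
    · rw [interior_Ici]; intro x hx
      exact (hd x hx).differentiableAt.differentiableWithinAt
    · rw [interior_Ici]; intro x hx
      rw [(hd x hx).deriv]
      have hx1 : (1:ℝ) ≤ x := le_of_lt hx
      rw [sqrt_fac1 hx1]
      -- need: 3√2 √(x-1) + (3√2/2)(x-1)√(x-1) - 3√(x-1)√(x+1) ≥ 0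
      -- i.e. √(x-1)(√2(2 + (x-1)) - 2√(x+1)) * (3/2) ≥ 0, √2(x+1) ≥ 2√(x+1) ⟺ √(x+1) ≥ √2
      have h2 := sqrt_two_le_sqrt_add hx1
      have hs : 0 ≤ Real.sqrt (x-1) := Real.sqrt_nonneg _
      have hs2 : Real.sqrt 2 ^ 2 = 2 := Real.sq_sqrt (by norm_num)
      have hx1s : Real.sqrt (x+1) ^ 2 = x + 1 := Real.sq_sqrt (by linarith)
      have h3 : 2 ≤ Real.sqrt 2 * Real.sqrt (x+1) := by
        nlinarith [mul_le_mul_of_nonneg_left h2 (Real.sqrt_nonneg 2)]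
      have key : 2 * Real.sqrt (x+1) ≤ Real.sqrt 2 * (x + 1) := by
        nlinarith [Real.sqrt_nonneg (x+1)]
      nlinarith
  have := hmono (Set.self_mem_Ici) h h
  have hF1 : F 1 = 0 := by simp [hF, fA_one]
  rw [hF1] at this
  simp only [hF] at this
  linarith

lemma cont_gA : Continuous gA :=
  (Real.continuous_arccos).sub (continuous_id.mul ((continuous_const.sub (continuous_pow 2)).sqrt))

lemma ineqC {t : ℝ} (h1 : -1 < t) (h2 : t ≤ 1) :
    3/2 * gA t ≤ 2*Real.sqrt 2*((1-t)*Real.sqrt (1-t)) := by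
  set G : ℝ → ℝ := fun t => 2*Real.sqrt 2*((1-t)*Real.sqrt (1-t)) - 3/2 * gA t with hG
  have hd : ∀ x ∈ Set.Ioo (-1:ℝ) 1, HasDerivAt G
      (2*Real.sqrt 2*(-(3/2 * Real.sqrt (1-x))) - 3/2 * (-(2 * Real.sqrt (1-x^2)))) x := by
    intro x hx
    exact ((hasDerivAt_q32 hx.2).const_mul (2*Real.sqrt 2)).sub
      ((hasDerivAt_gA hx.1 hx.2).const_mul (3/2))
  have hanti : AntitoneOn G (Set.Ioc (-1:ℝ) 1) := by
    apply antitoneOn_of_deriv_nonpos (convex_Ioc (-1) 1)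
    · apply Continuous.continuousOn
      have := cont_gA
      fun_prop
    · rw [interior_Ioc]; intro x hx
      exact (hd x hx).differentiableAt.differentiableWithinAt
    · rw [interior_Ioc]; intro x hx
      rw [(hd x hx).deriv]
      rw [sqrt_fac2 hx.2.le]
      have h2 : Real.sqrt (1+x) ≤ Real.sqrt 2 := Real.sqrt_le_sqrt (by linarith [hx.2])
      have hs : 0 ≤ Real.sqrt (1-x) := Real.sqrt_nonneg _
      nlinarith
  have := hanti (Set.mem_Ioc.2 ⟨h1, h2⟩) (Set.right_mem_Ioc.2 (by norm_num)) h2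
  have hG1 : G 1 = 0 := by simp [hG, gA_one]
  rw [hG1] at this
  simp only [hG] at this
  linarith

lemma ineqD {t : ℝ} (h1 : -1 < t) (h2 : t ≤ 1) :
    2*Real.sqrt 2*((1-t)*Real.sqrt (1-t)) - (3*Real.sqrt 2/5)*((1-t)^2*Real.sqrt (1-t))
      ≤ 3/2 * gA t := by
  set G : ℝ → ℝ := fun t => 3/2 * gA t
    - (2*Real.sqrt 2*((1-t)*Real.sqrt (1-t)) - (3*Real.sqrt 2/5)*((1-t)^2*Real.sqrt (1-t))) with hG
  have hd : ∀ x ∈ Set.Ioo (-1:ℝ) 1, HasDerivAt G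
      (3/2 * (-(2 * Real.sqrt (1-x^2)))
        - (2*Real.sqrt 2*(-(3/2 * Real.sqrt (1-x)))
          - (3*Real.sqrt 2/5)*(-(5/2 * ((1-x)*Real.sqrt (1-x)))))) x := by
    intro x hx
    exact ((hasDerivAt_gA hx.1 hx.2).const_mul (3/2)).sub
      (((hasDerivAt_q32 hx.2).const_mul (2*Real.sqrt 2)).sub
        ((hasDerivAt_q52 hx.2).const_mul (3*Real.sqrt 2/5)))
  have hanti : AntitoneOn G (Set.Ioc (-1:ℝ) 1) := by
    apply antitoneOn_of_deriv_nonpos (convex_Ioc (-1) 1)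
    · apply Continuous.continuousOn
      have := cont_gA
      fun_prop
    · rw [interior_Ioc]; intro x hx
      exact (hd x hx).differentiableAt.differentiableWithinAt
    · rw [interior_Ioc]; intro x hx
      rw [(hd x hx).deriv]
      rw [sqrt_fac2 hx.2.le]
      have h2 : Real.sqrt (1+x) ≤ Real.sqrt 2 := Real.sqrt_le_sqrt (by linarith [hx.2])
      have hs : 0 ≤ Real.sqrt (1-x) := Real.sqrt_nonneg _
      have ha : 0 ≤ Real.sqrt (1+x) := Real.sqrt_nonneg _
      have hsq : Real.sqrt (1+x) ^ 2 = 1 + x := Real.sq_sqrt (by linarith [hx.1])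
      have hs2 : Real.sqrt 2 ^ 2 = 2 := Real.sq_sqrt (by norm_num)
      -- need: √2 ≤ √(1+x) + (√2/2)(1-x)
      have key : Real.sqrt 2 ≤ Real.sqrt (1+x) + Real.sqrt 2/2 * (1-x) := by
        nlinarith [mul_le_mul_of_nonneg_left h2 ha]
      nlinarith
  have := hanti (Set.mem_Ioc.2 ⟨h1, h2⟩) (Set.right_mem_Ioc.2 (by norm_num)) h2
  have hG1 : G 1 = 0 := by simp [hG, gA_one]
  rw [hG1] at this
  simp only [hG] at this
  linarith

lemma rpow_three_halves {b : ℝ} (hb : 0 ≤ b) : b * Real.sqrt b = b ^ ((3:ℝ)/2) := by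
  have h1 : b ^ ((3:ℝ)/2) = (b ^ ((1:ℝ)/2)) ^ (3:ℕ) := by
    rw [← Real.rpow_natCast (b ^ ((1:ℝ)/2)) 3, ← Real.rpow_mul hb]
    norm_num
  rw [h1, ← Real.sqrt_eq_rpow]
  have h2 : Real.sqrt b ^ 2 = b := Real.sq_sqrt hb
  nlinarith [Real.sqrt_nonneg b]

lemma rpow_key {a b : ℝ} (ha : 0 ≤ a) (hb : 0 < b) :
    a ^ ((2:ℝ)/3) / b = (a / (b * Real.sqrt b)) ^ ((2:ℝ)/3) := by
  rw [rpow_three_halves hb.le, Real.div_rpow ha (Real.rpow_nonneg hb.le _),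
    ← Real.rpow_mul hb.le]
  norm_num

lemma two_sqrt_two_rpow : (2 * Real.sqrt 2) ^ ((2:ℝ)/3) = 2 := by
  rw [rpow_three_halves (by norm_num : (0:ℝ) ≤ 2), ← Real.rpow_mul (by norm_num : (0:ℝ) ≤ 2)]
  norm_num

lemma fA_nonneg {t : ℝ} (h : 1 ≤ t) : 0 ≤ fA t := by
  have hA := ineqA h
  have : 0 ≤ 2*Real.sqrt 2*((t-1)*Real.sqrt (t-1)) :=
    mul_nonneg (by positivity) (mul_nonneg (by linarith) (Real.sqrt_nonneg _))
  linarith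

lemma gA_pos {t : ℝ} (h1 : -1 < t) (h2 : t < 1) : 0 < gA t := by
  have hD := ineqD h1 h2.le
  have h1t : 0 < 1 - t := by linarith
  have hs : 0 < Real.sqrt (1-t) := Real.sqrt_pos.2 h1t
  have hs2 : 0 < Real.sqrt 2 := Real.sqrt_pos.2 (by norm_num)
  have h35 : 0 < 2 - 3/5*(1-t) := by linarith
  have key : 0 < Real.sqrt 2*((1-t)*Real.sqrt (1-t))*(2 - 3/5*(1-t)) :=
    mul_pos (by positivity) h35
  nlinarith [key]

lemma fA_pos {t : ℝ} (h : 1 < t) : 0 < fA t := by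
  have hA := ineqA h.le
  have h1t : 0 < t - 1 := by linarith
  have hs : 0 < Real.sqrt (t-1) := Real.sqrt_pos.2 h1t
  have key : 0 < 2*Real.sqrt 2*((t-1)*Real.sqrt (t-1)) := by positivity
  linarith

lemma tendsto_right : Tendsto (fun t : ℝ => ((3/2)*fA t) ^ ((2:ℝ)/3) / (t-1))
    (𝓝[>] (1:ℝ)) (𝓝 2) := by
  set r : ℝ → ℝ := fun t => (3/2)*fA t / ((t-1)*Real.sqrt (t-1)) with hr
  have hmem : ∀ᶠ t in 𝓝[>] (1:ℝ), t ∈ Set.Ioi (1:ℝ) := eventually_mem_nhdsWithin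
  have hsq : Tendsto r (𝓝[>] (1:ℝ)) (𝓝 (2*Real.sqrt 2)) := by
    apply tendsto_of_tendsto_of_tendsto_of_le_of_le'
      (h := fun t : ℝ => 2*Real.sqrt 2 + (3*Real.sqrt 2/5)*(t-1)) tendsto_const_nhds
    · have hc : Continuous fun t : ℝ => 2*Real.sqrt 2 + (3*Real.sqrt 2/5)*(t-1) := by fun_prop
      have := (hc.tendsto 1).mono_left (nhdsWithin_le_nhds (s := Set.Ioi (1:ℝ)))
      simpa using this
    · filter_upwards [hmem] with t ht
      have ht1 : (1:ℝ) < t := ht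
      have hp : 0 < (t-1)*Real.sqrt (t-1) := by
        have : 0 < Real.sqrt (t-1) := Real.sqrt_pos.2 (by linarith)
        nlinarith
      rw [hr, le_div_iff₀ hp]
      exact ineqA ht1.le
    · filter_upwards [hmem] with t ht
      have ht1 : (1:ℝ) < t := ht
      have hp : 0 < (t-1)*Real.sqrt (t-1) := by
        have : 0 < Real.sqrt (t-1) := Real.sqrt_pos.2 (by linarith)
        nlinarith
      rw [hr, div_le_iff₀ hp]
      have hB := ineqB ht1.le
      nlinarith [Real.sqrt_nonneg (t-1), Real.sqrt_nonneg 2]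
  have hcont : ContinuousAt (fun x : ℝ => x ^ ((2:ℝ)/3)) (2*Real.sqrt 2) :=
    Real.continuousAt_rpow_const _ _ (Or.inr (by norm_num))
  have h2 : Tendsto (fun t : ℝ => (r t) ^ ((2:ℝ)/3)) (𝓝[>] (1:ℝ)) (𝓝 2) := by
    have := hcont.tendsto.comp hsq
    rwa [two_sqrt_two_rpow] at this
  apply h2.congr'
  filter_upwards [hmem] with t ht
  have ht1 : (1:ℝ) < t := ht
  rw [hr]
  have hfa := fA_nonneg ht1.le
  rw [← rpow_key (by linarith : (0:ℝ) ≤ (3/2)*fA t) (by linarith : (0:ℝ) < t - 1)]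

lemma tendsto_left : Tendsto (fun t : ℝ => ((3/2)*gA t) ^ ((2:ℝ)/3) / (1-t))
    (𝓝[<] (1:ℝ)) (𝓝 2) := by
  set r : ℝ → ℝ := fun t => (3/2)*gA t / ((1-t)*Real.sqrt (1-t)) with hr
  have hmem : Set.Ioo (0:ℝ) 1 ∈ 𝓝[<] (1:ℝ) :=
    Ioo_mem_nhdsLT_of_mem (by norm_num : (1:ℝ) ∈ Set.Ioc (0:ℝ) 1)
  have hsq : Tendsto r (𝓝[<] (1:ℝ)) (𝓝 (2*Real.sqrt 2)) := by
    apply tendsto_of_tendsto_of_tendsto_of_le_of_le'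
      (g := fun t : ℝ => 2*Real.sqrt 2 - (3*Real.sqrt 2/5)*(1-t))
    · have hc : Continuous fun t : ℝ => 2*Real.sqrt 2 - (3*Real.sqrt 2/5)*(1-t) := by fun_prop
      have := (hc.tendsto 1).mono_left (nhdsWithin_le_nhds (s := Set.Iio (1:ℝ)))
      simpa using this
    · exact tendsto_const_nhds
    · filter_upwards [hmem] with t ht
      have hp : 0 < (1-t)*Real.sqrt (1-t) := by
        have : 0 < Real.sqrt (1-t) := Real.sqrt_pos.2 (by linarith [ht.2])
        nlinarith [ht.2]
      rw [hr, le_div_iff₀ hp]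
      have hD := ineqD (by linarith [ht.1]) ht.2.le
      nlinarith [Real.sqrt_nonneg (1-t), Real.sqrt_nonneg 2]
    · filter_upwards [hmem] with t ht
      have hp : 0 < (1-t)*Real.sqrt (1-t) := by
        have : 0 < Real.sqrt (1-t) := Real.sqrt_pos.2 (by linarith [ht.2])
        nlinarith [ht.2]
      rw [hr, div_le_iff₀ hp]
      have hC := ineqC (by linarith [ht.1]) ht.2.le
      linarith
  have hcont : ContinuousAt (fun x : ℝ => x ^ ((2:ℝ)/3)) (2*Real.sqrt 2) :=
    Real.continuousAt_rpow_const _ _ (Or.inr (by norm_num))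
  have h2 : Tendsto (fun t : ℝ => (r t) ^ ((2:ℝ)/3)) (𝓝[<] (1:ℝ)) (𝓝 2) := by
    have := hcont.tendsto.comp hsq
    rwa [two_sqrt_two_rpow] at this
  apply h2.congr'
  filter_upwards [hmem] with t ht
  have hga := (gA_pos (by linarith [ht.1]) ht.2).le
  rw [hr, ← rpow_key (by linarith : (0:ℝ) ≤ (3/2)*gA t) (by linarith [ht.2] : (0:ℝ) < 1 - t)]

lemma strictMono_fA : StrictMonoOn fA (Set.Ici 1) := by
  apply strictMonoOn_of_deriv_pos (convex_Ici 1) contOn_fA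
  rw [interior_Ici]
  intro x hx
  rw [(hasDerivAt_fA hx).deriv]
  have := sqrt_sq_sub_pos hx
  linarith

lemma strictAnti_gA : StrictAntiOn gA (Set.Ioc (-1) 1) := by
  apply strictAntiOn_of_deriv_neg (convex_Ioc (-1) 1) cont_gA.continuousOn
  rw [interior_Ioc]
  intro x hx
  rw [(hasDerivAt_gA hx.1 hx.2).deriv]
  have : 0 < Real.sqrt (1 - x^2) := Real.sqrt_pos.2 (by nlinarith [hx.1, hx.2])
  linarith


/-- The function `U` on `(−1, ∞)` defined by
`U(t) = ((3/2)(t√(t²−1) − log(t+√(t²−1))))^{2/3}` for `t ≥ 1` and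
`U(t) = −((3/2)(arccos t − t√(1−t²)))^{2/3}` for `−1 < t < 1` satisfies:
(i) both inner quantities are nonnegative on the respective ranges;
(ii) `U` is continuous on `(−1, ∞)`;
(iii) `U(t)/(t−1) → 2` as `t → 1`;
(iv) `U` is strictly increasing on some interval `[1−δ, 1+δ]`. -/
theorem stmt_18 (U : ℝ → ℝ)
    (hU1 : ∀ t : ℝ, 1 ≤ t →
      U t = ((3/2) * (t * Real.sqrt (t ^ 2 - 1)
          - Real.log (t + Real.sqrt (t ^ 2 - 1)))) ^ ((2 : ℝ)/3))
    (hU2 : ∀ t : ℝ, -1 < t → t < 1 →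
      U t = -(((3/2) * (Real.arccos t - t * Real.sqrt (1 - t ^ 2))) ^ ((2 : ℝ)/3))) :
    (∀ t : ℝ, 1 ≤ t →
        0 ≤ t * Real.sqrt (t ^ 2 - 1) - Real.log (t + Real.sqrt (t ^ 2 - 1)))
      ∧ (∀ t : ℝ, -1 < t → t < 1 → 0 ≤ Real.arccos t - t * Real.sqrt (1 - t ^ 2))
      ∧ ContinuousOn U (Set.Ioi (-1 : ℝ))
      ∧ Tendsto (fun t : ℝ => U t / (t - 1)) (𝓝[≠] (1 : ℝ)) (𝓝 2)
      ∧ ∃ δ > (0 : ℝ), StrictMonoOn U (Set.Icc (1 - δ) (1 + δ)) := by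
  have hU1' : ∀ t : ℝ, 1 ≤ t → U t = ((3/2) * fA t) ^ ((2:ℝ)/3) := fun t ht => hU1 t ht
  have hU2' : ∀ t : ℝ, -1 < t → t < 1 → U t = -(((3/2) * gA t) ^ ((2:ℝ)/3)) :=
    fun t h1 h2 => hU2 t h1 h2
  have hU10 : U 1 = 0 := by
    rw [hU1' 1 le_rfl, fA_one]
    norm_num
  -- (iii)
  have hR : Tendsto (fun t : ℝ => U t / (t - 1)) (𝓝[>] (1:ℝ)) (𝓝 2) := by
    apply tendsto_right.congr'
    filter_upwards [eventually_mem_nhdsWithin] with t (ht : (1:ℝ) < t)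
    rw [hU1' t ht.le]
  have hL : Tendsto (fun t : ℝ => U t / (t - 1)) (𝓝[<] (1:ℝ)) (𝓝 2) := by
    apply tendsto_left.congr'
    filter_upwards [Ioo_mem_nhdsLT_of_mem (by norm_num : (1:ℝ) ∈ Set.Ioc (0:ℝ) 1)] with t ht
    rw [hU2' t (by linarith [ht.1]) ht.2]
    rw [show t - 1 = -(1-t) by ring, div_neg, neg_div, neg_neg]
  have hiii : Tendsto (fun t : ℝ => U t / (t - 1)) (𝓝[≠] (1:ℝ)) (𝓝 2) := by
    rw [← nhdsLT_sup_nhdsGT]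
    exact Filter.tendsto_sup.2 ⟨hL, hR⟩
  refine ⟨fun t ht => fA_nonneg ht, fun t h1 h2 => (gA_pos h1 h2).le, ?_, hiii, ?_⟩
  · -- continuity
    intro x hx
    have hx1 : (-1:ℝ) < x := hx
    apply ContinuousAt.continuousWithinAt
    rcases lt_trichotomy x 1 with hlt | heq | hgt
    · have hc : ContinuousAt (fun t : ℝ => -(((3/2) * gA t) ^ ((2:ℝ)/3))) x := by
        apply ContinuousAt.neg
        exact (Real.continuousAt_rpow_const _ _ (Or.inr (by norm_num))).comp
          ((continuous_const.mul cont_gA).continuousAt)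
      apply hc.congr
      filter_upwards [isOpen_Ioo.mem_nhds (Set.mem_Ioo.2 ⟨hx1, hlt⟩)] with t ht
      exact (hU2' t ht.1 ht.2).symm
    · subst heq
      rw [ContinuousAt, hU10]
      rw [← nhdsNE_sup_pure]
      refine Filter.tendsto_sup.2 ⟨?_, ?_⟩
      · have hmul : Tendsto (fun t : ℝ => (U t / (t - 1)) * (t - 1)) (𝓝[≠] (1:ℝ)) (𝓝 0) := by
          have h2 : Tendsto (fun t : ℝ => t - 1) (𝓝[≠] (1:ℝ)) (𝓝 0) := by
            have : Tendsto (fun t : ℝ => t - 1) (𝓝 (1:ℝ)) (𝓝 0) := by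
              have hc : Continuous (fun t : ℝ => t - 1) := by fun_prop
              have := hc.tendsto (1:ℝ)
              simpa using this
            exact this.mono_left nhdsWithin_le_nhds
          have := hiii.mul h2
          simpa using this
        apply hmul.congr'
        filter_upwards [eventually_mem_nhdsWithin] with t ht
        exact div_mul_cancel₀ (U t) (sub_ne_zero.2 ht)
      · have := tendsto_pure_nhds U 1
        rwa [hU10] at this
    · have hc : ContinuousAt (fun t : ℝ => ((3/2) * fA t) ^ ((2:ℝ)/3)) x := by
        refine (Real.continuousAt_rpow_const _ _ (Or.inr (by norm_num))).comp ?_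
        have : ContinuousAt fA x := by
          have : Set.Ici (1:ℝ) ∈ 𝓝 x := mem_of_superset
            (isOpen_Ioi.mem_nhds (Set.mem_Ioi.2 hgt)) Set.Ioi_subset_Ici_self
          exact (contOn_fA.continuousAt this)
        exact continuousAt_const.mul this
      apply hc.congr
      filter_upwards [isOpen_Ioi.mem_nhds (Set.mem_Ioi.2 hgt)] with t (ht : (1:ℝ) < t)
      exact (hU1' t ht.le).symm
  · -- strict mono
    refine ⟨1/2, by norm_num, ?_⟩
    intro x hx y hy hxy
    have hx1 : (1:ℝ)/2 ≤ x := by have := hx.1; linarith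
    have hy2 : y ≤ 3/2 := by have := hy.2; linarith
    by_cases h1x : 1 ≤ x
    · have h1y : 1 ≤ y := le_of_lt (lt_of_le_of_lt h1x hxy)
      rw [hU1' x h1x, hU1' y h1y]
      exact Real.rpow_lt_rpow (by linarith [fA_nonneg h1x])
        (by linarith [strictMono_fA h1x (Set.mem_Ici.2 h1y) hxy]) (by norm_num)
    · push_neg at h1x
      have hxm1 : (-1:ℝ) < x := by linarith
      have hUx : U x < 0 := by
        rw [hU2' x hxm1 h1x]
        have := Real.rpow_pos_of_pos (by linarith [gA_pos hxm1 h1x] : (0:ℝ) < (3/2) * gA x)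
          ((2:ℝ)/3)
        linarith
      by_cases h1y : 1 ≤ y
      · have : 0 ≤ U y := by
          rw [hU1' y h1y]
          exact Real.rpow_nonneg (by linarith [fA_nonneg h1y]) _
        linarith
      · push_neg at h1y
        have hym1 : (-1:ℝ) < y := by linarith
        rw [hU2' x hxm1 h1x, hU2' y hym1 h1y]
        have hanti := strictAnti_gA (Set.mem_Ioc.2 ⟨hxm1, h1x.le⟩)
          (Set.mem_Ioc.2 ⟨hym1, h1y.le⟩) hxy
        exact neg_lt_neg (Real.rpow_lt_rpow (by linarith [gA_pos hym1 h1y])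
          (by linarith) (by norm_num))
end
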